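/- arXiv:math/0507090 — 5 statements merged into one kernel-verified Lean document; each statement's English description precedes it below -/
import Mathlib

section
/- Let Σ be a finite alphabet (a fintype) and let L be a language over Σ. If L is context-free, then the language L° := {y ++ x | x, y : List Σ, x ++ y ∈ L} of all cyclic permutations of words of L is also context-free. -/
namespace CycAux
open ContextFreeGrammar

universe uT uN
variable {T : Type uT}

section DerivesIn
variable {g : ContextFreeGrammar.{uT} T}

/-- Step-counted derivations. -/
inductive DerivesIn (g : ContextFreeGrammar.{uT} T) :
    List (Symbol T g.NT) → List (Symbol T g.NT) → ℕ → Prop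
  | refl (w : List (Symbol T g.NT)) : DerivesIn g w w 0
  | head {u v w : List (Symbol T g.NT)} {n : ℕ} :
      g.Produces u v → DerivesIn g v w n → DerivesIn g u w (n + 1)

lemma DerivesIn.derives {u v : List (Symbol T g.NT)} {n : ℕ} (h : DerivesIn g u v n) :
    g.Derives u v := by
  induction h with
  | refl => rfl
  | head hp _ ih => exact hp.trans_derives ih

lemma DerivesIn.tail {u v w : List (Symbol T g.NT)} {n : ℕ} (h : DerivesIn g u v n)
    (hp : g.Produces v w) : DerivesIn g u w (n + 1) := by
  induction h with
  | refl => exact .head hp (.refl _)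
  | head hq _ ih => exact .head hq (ih hp)

lemma Derives.derivesIn {u v : List (Symbol T g.NT)} (h : g.Derives u v) :
    ∃ n, DerivesIn g u v n := by
  induction h with
  | refl => exact ⟨0, .refl _⟩
  | tail _ hp ih =>
      obtain ⟨n, hn⟩ := ih
      exact ⟨n + 1, hn.tail hp⟩

lemma DerivesIn.zero {u v : List (Symbol T g.NT)} (h : DerivesIn g u v 0) : u = v := by
  cases h; rfl

lemma rewrites_append_split {N : Type uN} {r : ContextFreeRule T N} :
    ∀ {u v w : List (Symbol T N)}, r.Rewrites (u ++ v) w →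
    (∃ u', r.Rewrites u u' ∧ w = u' ++ v) ∨ (∃ v', r.Rewrites v v' ∧ w = u ++ v') := by
  intro u
  induction u with
  | nil => intro v w h; exact .inr ⟨w, h, rfl⟩
  | cons x u ih =>
      intro v w h
      cases h with
      | head s => exact .inl ⟨r.output ++ u, ContextFreeRule.Rewrites.head u, by simp⟩
      | cons s₂ hs =>
          rcases ih hs with ⟨u', hu', rfl⟩ | ⟨v', hv', rfl⟩
          · exact .inl ⟨x :: u', hu'.cons x, rfl⟩
          · exact .inr ⟨v', hv', rfl⟩

lemma DerivesIn.append_split :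
    ∀ {n : ℕ} {u v w : List (Symbol T g.NT)}, DerivesIn g (u ++ v) w n →
    ∃ w₁ w₂ n₁ n₂, w = w₁ ++ w₂ ∧ n₁ + n₂ = n ∧ DerivesIn g u w₁ n₁ ∧ DerivesIn g v w₂ n₂ := by
  intro n
  induction n using Nat.strong_induction_on with
  | _ n ih =>
      intro u v w h
      cases h with
      | refl => exact ⟨u, v, 0, 0, rfl, rfl, .refl _, .refl _⟩
      | @head _ s _ m hp hs =>
          obtain ⟨r, hr, hrw⟩ := hp
          rcases rewrites_append_split hrw with ⟨u', hu', rfl⟩ | ⟨v', hv', rfl⟩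
          · obtain ⟨w₁, w₂, n₁, n₂, rfl, hn, h1, h2⟩ := ih m (by omega) hs
            exact ⟨w₁, w₂, n₁ + 1, n₂, rfl, by omega, .head ⟨r, hr, hu'⟩ h1, h2⟩
          · obtain ⟨w₁, w₂, n₁, n₂, rfl, hn, h1, h2⟩ := ih m (by omega) hs
            exact ⟨w₁, w₂, n₁, n₂ + 1, rfl, by omega, h1, .head ⟨r, hr, hv'⟩ h2⟩

lemma no_rewrite_terminal {N : Type uN} {r : ContextFreeRule T N} {a : T}
    {w : List (Symbol T N)} (h : r.Rewrites [Symbol.terminal a] w) : False := by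
  rcases h.exists_parts with ⟨p, q, hpq, -⟩
  rcases p with - | ⟨x, p⟩ <;> simp_all

lemma DerivesIn.terminal {a : T} {w : List (Symbol T g.NT)} {n : ℕ}
    (h : DerivesIn g [Symbol.terminal a] w n) : w = [Symbol.terminal a] := by
  cases h with
  | refl => rfl
  | head hp _ => obtain ⟨r, -, hrw⟩ := hp; exact absurd hrw no_rewrite_terminal

lemma DerivesIn.nil {w : List (Symbol T g.NT)} {n : ℕ}
    (h : DerivesIn g [] w n) : w = [] := by
  cases h with
  | refl => rfl
  | head hp _ =>
      obtain ⟨r, -, hrw⟩ := hp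
      rcases hrw.exists_parts with ⟨p, q, hpq, -⟩
      simp at hpq

lemma DerivesIn.nonterminal_cases {A : g.NT} {w : List (Symbol T g.NT)} {n : ℕ}
    (h : DerivesIn g [Symbol.nonterminal A] w n) :
    w = [Symbol.nonterminal A] ∨
    ∃ r ∈ g.rules, r.input = A ∧ ∃ m, n = m + 1 ∧ DerivesIn g r.output w m := by
  cases h with
  | refl => exact .inl rfl
  | @head _ v _ m hp hs =>
      obtain ⟨r, hr, hrw⟩ := hp
      rcases hrw.exists_parts with ⟨p, q, hpq, hv⟩
      rcases p with - | ⟨x, p⟩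
      · simp at hpq
        obtain ⟨hin, hq⟩ := hpq
        refine .inr ⟨r, hr, hin.symm, m, rfl, ?_⟩
        rwa [hv, hq, List.nil_append, List.append_nil] at hs
      · exfalso
        simp [List.cons_eq_append_iff] at hpq

lemma DerivesIn.tail_cases {u w : List (Symbol T g.NT)} {n : ℕ}
    (h : DerivesIn g u w (n + 1)) :
    ∃ v, DerivesIn g u v n ∧ g.Produces v w := by
  induction n generalizing u with
  | zero =>
      cases h with
      | head hp hs => exact ⟨u, .refl u, hs.zero ▸ hp⟩
  | succ m ih =>
      cases h with
      | head hp hs =>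
          obtain ⟨v, hv, hvw⟩ := ih hs
          exact ⟨v, .head hp hv, hvw⟩

end DerivesIn

end CycAux

namespace CycAux
open ContextFreeGrammar

variable {T : Type}

/-- All decompositions `l = α ++ c :: β`. -/
def splits {S : Type*} : List S → List (List S × S × List S)
  | [] => []
  | c :: t => ([], c, t) :: (splits t).map (fun p => (c :: p.1, p.2.1, p.2.2))

lemma mem_splits {S : Type*} {l α β : List S} {c : S} :
    (α, c, β) ∈ splits l ↔ l = α ++ c :: β := by
  induction l generalizing α with
  | nil => simp [splits]
  | cons d t ih =>
      cases α with
      | nil => simp [splits, eq_comm, and_comm]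
      | cons a α => simp [splits, ih, Prod.ext_iff, eq_comm, and_comm, and_assoc]

variable {g : ContextFreeGrammar.{0} T}

/-- Lift a symbol into the bigger grammar. -/
def liftSym {N : Type} : Symbol T N → Symbol T (Option (N ⊕ N))
  | .terminal t => .terminal t
  | .nonterminal A => .nonterminal (some (Sum.inl A))

def liftStr {N : Type} (s : List (Symbol T N)) : List (Symbol T (Option (N ⊕ N))) :=
  s.map liftSym

@[simp] lemma liftStr_append {N : Type} (s t : List (Symbol T N)) :
    liftStr (s ++ t) = liftStr s ++ liftStr t := List.map_append

@[simp] lemma liftStr_terminal_word {N : Type} (w : List T) :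
    liftStr (w.map Symbol.terminal) = (w.map Symbol.terminal : List (Symbol T (Option (N ⊕ N)))) := by
  rw [liftStr, List.map_map]; rfl

/-- The rule for a split of the output of rule with input `inp`. -/
def mkRule {N : Type} (inp : N) :
    List (Symbol T N) × Symbol T N × List (Symbol T N) → ContextFreeRule T (Option (N ⊕ N))
  | (α, .terminal a, β) =>
      ⟨none, .terminal a :: (liftStr β ++ [.nonterminal (some (Sum.inr inp))] ++ liftStr α)⟩
  | (α, .nonterminal A, β) =>
      ⟨some (Sum.inr A), liftStr β ++ [.nonterminal (some (Sum.inr inp))] ++ liftStr α⟩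

/-- Rule list for the cyclic closure grammar. -/
noncomputable def cycRuleList (g : ContextFreeGrammar.{0} T) :
    List (ContextFreeRule T (Option (g.NT ⊕ g.NT))) :=
  ⟨none, [.nonterminal (some (Sum.inl g.initial))]⟩ ::
  ⟨some (Sum.inr g.initial), []⟩ ::
  (g.rules.toList.map (fun r => ⟨some (Sum.inl r.input), liftStr r.output⟩) ++
   g.rules.toList.flatMap (fun r => (splits r.output).map (mkRule r.input)))

/-- The grammar for the cyclic closure. -/
noncomputable abbrev cycG (g : ContextFreeGrammar.{0} T) : ContextFreeGrammar T :=
  letI : DecidableEq (ContextFreeRule T (Option (g.NT ⊕ g.NT))) := Classical.decEq _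
  ⟨Option (g.NT ⊕ g.NT), none, (cycRuleList g).toFinset⟩

lemma mem_cycG_rules {r' : ContextFreeRule T (Option (g.NT ⊕ g.NT))} :
    r' ∈ (cycG g).rules ↔
      r' = ⟨none, [.nonterminal (some (Sum.inl g.initial))]⟩ ∨
      r' = ⟨some (Sum.inr g.initial), []⟩ ∨
      (∃ r ∈ g.rules, r' = ⟨some (Sum.inl r.input), liftStr r.output⟩) ∨
      (∃ r ∈ g.rules, ∃ α c β, r.output = α ++ c :: β ∧ r' = mkRule r.input (α, c, β)) := by
  letI : DecidableEq (ContextFreeRule T (Option (g.NT ⊕ g.NT))) := Classical.decEq _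
  have : (cycG g).rules = (cycRuleList g).toFinset := rfl
  rw [this, List.mem_toFinset, cycRuleList]
  simp only [List.mem_cons, List.mem_append, List.mem_map, List.mem_flatMap, Finset.mem_toList,
    or_assoc]
  constructor
  · rintro (h | h | ⟨r, hr, h⟩ | ⟨r, hr, ⟨a, c, b⟩, hm, h⟩)
    exacts [.inl h, .inr (.inl h), .inr (.inr (.inl ⟨r, hr, h.symm⟩)),
      .inr (.inr (.inr ⟨r, hr, a, c, b, mem_splits.mp hm, h.symm⟩))]
  · rintro (h | h | ⟨r, hr, h⟩ | ⟨r, hr, a, c, b, hm, h⟩)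
    exacts [.inl h, .inr (.inl h), .inr (.inr (.inl ⟨r, hr, h.symm⟩)),
      .inr (.inr (.inr ⟨r, hr, (a, c, b), mem_splits.mpr hm, h.symm⟩))]

end CycAux

namespace CycAux
open ContextFreeGrammar

variable {T : Type}

/-- Locate an element in a three-way append decomposition. -/
lemma three_way {S : Type*} : ∀ {u v p q γ : List S} {c : S}, u ++ c :: v = p ++ γ ++ q →
    (∃ u₂, p = u ++ c :: u₂ ∧ v = u₂ ++ γ ++ q) ∨
    (∃ α β, γ = α ++ c :: β ∧ u = p ++ α ∧ v = β ++ q) ∨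
    (∃ v₁, q = v₁ ++ c :: v ∧ u = p ++ γ ++ v₁) := by
  intro u v p q γ c h
  rw [List.append_assoc, List.append_eq_append_iff] at h
  rcases h with ⟨a', rfl, h⟩ | ⟨c', rfl, h⟩
  · rcases a' with - | ⟨x, a'⟩
    · rcases γ with - | ⟨y, γ⟩
      · simp only [List.nil_append] at h
        exact .inr (.inr ⟨[], h.symm, by simp⟩)
      · simp only [List.nil_append, List.cons_append, List.cons.injEq] at h
        exact .inr (.inl ⟨[], γ, by simp [← h.1, h.2]⟩)
    · simp only [List.cons_append, List.cons.injEq] at h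
      exact .inl ⟨a', by simp [h.1], by simp [h.2]⟩
  · rw [List.append_eq_append_iff] at h
    rcases h with ⟨d, rfl, h⟩ | ⟨e, rfl, h⟩
    · exact .inr (.inr ⟨d, h, by simp⟩)
    · rcases e with - | ⟨y, e⟩
      · simp only [List.nil_append] at h
        exact .inr (.inr ⟨[], h.symm, by simp⟩)
      · simp only [List.cons_append, List.cons.injEq] at h
        exact .inr (.inl ⟨c', e, by simp [← h.1], rfl, h.2⟩)

variable {g : ContextFreeGrammar.{0} T}

lemma liftSym_injective : Function.Injective (liftSym (T := T) (N := g.NT)) := by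
  rintro (x | x) (y | y) h <;> simp [liftSym] at h <;> simp [h]

lemma liftStr_eq_terminal_word {s : List (Symbol T g.NT)} {w : List T}
    (h : liftStr s = (w.map Symbol.terminal : List (Symbol T (cycG g).NT))) :
    s = w.map Symbol.terminal := by
  have h' : liftStr s = liftStr (w.map Symbol.terminal) := by rw [h, liftStr_terminal_word]
  exact List.map_injective_iff.mpr liftSym_injective h'

lemma lift_derives {u v : List (Symbol T g.NT)} (h : g.Derives u v) :
    (cycG g).Derives (liftStr u) (liftStr v) := by
  induction h with
  | refl => rfl
  | tail _ hp ih =>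
      refine ih.trans_produces ?_
      obtain ⟨r, hr, hrw⟩ := hp
      obtain ⟨p, q, rfl, rfl⟩ := hrw.exists_parts
      refine ⟨⟨some (Sum.inl r.input), liftStr r.output⟩,
        mem_cycG_rules.mpr (.inr (.inr (.inl ⟨r, hr, rfl⟩))), ?_⟩
      simpa [liftStr, liftSym] using
        ContextFreeRule.rewrites_of_exists_parts
          (⟨some (Sum.inl r.input), liftStr r.output⟩ : ContextFreeRule T (cycG g).NT)
          (liftStr p) (liftStr q)

lemma liftStr_eq_append_cons {s : List (Symbol T g.NT)} {p q : List (Symbol T (cycG g).NT)}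
    {c : Symbol T (cycG g).NT} (h : liftStr s = p ++ c :: q) :
    ∃ p₀ c₀ q₀, s = p₀ ++ c₀ :: q₀ ∧ p = liftStr p₀ ∧ c = liftSym c₀ ∧ q = liftStr q₀ := by
  obtain ⟨p₀, rest, rfl, rfl, hrest⟩ := List.map_eq_append_iff.mp h
  obtain ⟨c₀, q₀, rfl, rfl, rfl⟩ := List.map_eq_cons_iff.mp hrest
  exact ⟨p₀, c₀, q₀, rfl, rfl, rfl, rfl⟩

/-- Rules of `cycG` whose input is an `inl`-nonterminal are exactly the lifted rules. -/
lemma cycG_rule_inl {r' : ContextFreeRule T (cycG g).NT} (hr' : r' ∈ (cycG g).rules)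
    {A : g.NT} (hA : r'.input = some (Sum.inl A)) :
    ∃ r ∈ g.rules, r.input = A ∧ r'.output = liftStr r.output := by
  rcases mem_cycG_rules.mp hr' with rfl | rfl | ⟨r, hr, rfl⟩ | ⟨r, hr, α, c, β, hsplit, rfl⟩
  · exact absurd hA (by rintro ⟨⟩)
  · exact absurd hA (by simp)
  · refine ⟨r, hr, ?_, rfl⟩
    injection hA with h
    exact Sum.inl_injective h
  · exfalso
    rcases c with a | B <;> simp only [mkRule] at hA
    · exact absurd hA (by simp)
    · exact absurd hA (by simp)

lemma DerivesIn.head_cases {g : ContextFreeGrammar.{0} T} {u w : List (Symbol T g.NT)} {n : ℕ}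
    (h : DerivesIn g u w (n + 1)) : ∃ v, g.Produces u v ∧ DerivesIn g v w n := by
  cases h with | head hp hs => exact ⟨_, hp, hs⟩

lemma unlift_derivesIn : ∀ {n : ℕ} {s : List (Symbol T g.NT)} {w : List T},
    DerivesIn (cycG g) (liftStr s) (w.map Symbol.terminal) n → g.Derives s (w.map .terminal) := by
  intro n
  induction n with
  | zero =>
      intro s w h
      rw [liftStr_eq_terminal_word h.zero]
  | succ m ih =>
      intro s w h
      obtain ⟨v, hp, hs⟩ := h.head_cases
      obtain ⟨r', hr', hrw⟩ := hp
      obtain ⟨p, q, hpq, rfl⟩ := hrw.exists_parts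
      rw [List.append_assoc, List.singleton_append] at hpq
      obtain ⟨p₀, c₀, q₀, rfl, rfl, hc, rfl⟩ := liftStr_eq_append_cons hpq
      rcases c₀ with a | A
      · exact absurd hc (by simp [liftSym])
      · have hA : r'.input = some (Sum.inl A) := by
          simpa [liftSym] using hc
        obtain ⟨r, hr, rfl, hout⟩ := cycG_rule_inl hr' hA
        have hstep : g.Produces (p₀ ++ Symbol.nonterminal r.input :: q₀)
            (p₀ ++ r.output ++ q₀) := by
          refine ⟨r, hr, ?_⟩
          simpa using ContextFreeRule.rewrites_of_exists_parts r p₀ q₀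
        refine hstep.trans_derives (ih ?_)
        rw [hout, ← liftStr_append, ← liftStr_append] at hs
        exact hs

end CycAux

namespace CycAux
open ContextFreeGrammar

variable {T : Type} {g : ContextFreeGrammar.{0} T}

lemma cyc_lift_step {r : ContextFreeRule T g.NT} (hr : r ∈ g.rules)
    (p q : List (Symbol T (Option (g.NT ⊕ g.NT)))) :
    (cycG g).Produces (p ++ [.nonterminal (some (Sum.inl r.input))] ++ q)
      (p ++ liftStr r.output ++ q) :=
  ⟨⟨some (Sum.inl r.input), liftStr r.output⟩,
    mem_cycG_rules.mpr (.inr (.inr (.inl ⟨r, hr, rfl⟩))),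
    ContextFreeRule.rewrites_of_exists_parts _ p q⟩

lemma liftStr_cons (c : Symbol T g.NT) (s : List (Symbol T g.NT)) :
    liftStr (c :: s) = liftSym c :: liftStr s := rfl

lemma context_derives : ∀ {n : ℕ} {u v : List (Symbol T g.NT)} {A : g.NT},
    DerivesIn g [.nonterminal g.initial] (u ++ Symbol.nonterminal A :: v) n →
    (cycG g).Derives [.nonterminal (some (Sum.inr A))] (liftStr v ++ liftStr u) := by
  intro n
  induction n with
  | zero =>
      intro u v A h
      have h0 := h.zero
      rcases u with - | ⟨x, u⟩ <;> simp at h0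
      obtain ⟨rfl, rfl⟩ := h0
      simpa [liftStr] using
        (Produces.single (⟨(⟨some (Sum.inr g.initial), []⟩ : ContextFreeRule T (cycG g).NT),
          mem_cycG_rules.mpr (.inr (.inl rfl)),
          ContextFreeRule.Rewrites.input_output⟩ : (cycG g).Produces _ _))
  | succ m ih =>
      intro u v A h
      obtain ⟨s, hsn, hp⟩ := h.tail_cases
      obtain ⟨r, hr, hrw⟩ := hp
      obtain ⟨p, q, hs, huv⟩ := hrw.exists_parts
      rcases three_way (by simpa using huv) with
        ⟨u₂, rfl, rfl⟩ | ⟨α, β, hout, rfl, rfl⟩ | ⟨v₁, rfl, rfl⟩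
      · -- the marked nonterminal is inside p
        have hsn' : DerivesIn g [.nonterminal g.initial]
            (u ++ Symbol.nonterminal A :: (u₂ ++ Symbol.nonterminal r.input :: q)) m := by
          rw [hs] at hsn; simpa using hsn
        have step := cyc_lift_step hr (liftStr u₂) (liftStr q ++ liftStr u)
        refine (ih hsn').trans ?_
        refine (Derives.refl _).trans_produces ?_ |>.trans (Derives.refl _)
        · simpa [liftStr_cons, liftSym, liftStr_append] using step
      · -- the marked nonterminal is inside the output of r
        have hsn' : DerivesIn g [.nonterminal g.initial]
            (p ++ Symbol.nonterminal r.input :: q) m := by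
          rw [hs] at hsn; simpa using hsn
        have hrule : mkRule r.input (α, Symbol.nonterminal A, β) ∈ (cycG g).rules :=
          mem_cycG_rules.mpr (.inr (.inr (.inr ⟨r, hr, α, _, β, hout, rfl⟩)))
        have first : (cycG g).Produces [.nonterminal (some (Sum.inr A))]
            (liftStr β ++ [.nonterminal (some (Sum.inr r.input))] ++ liftStr α) :=
          ⟨_, hrule, ContextFreeRule.Rewrites.input_output⟩
        refine first.trans_derives ?_
        have mid := ((ih hsn').append_left (liftStr β)).append_right (liftStr α)
        refine (Derives.refl _).trans (by simpa using mid) |>.trans ?_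
        simp [liftStr_append]
        rfl
      · -- the marked nonterminal is inside q
        have hsn' : DerivesIn g [.nonterminal g.initial]
            ((p ++ Symbol.nonterminal r.input :: v₁) ++ Symbol.nonterminal A :: v) m := by
          rw [hs] at hsn; simpa using hsn
        have step := cyc_lift_step hr (liftStr v ++ liftStr p)
          (liftStr v₁)
        refine (ih hsn').trans ?_
        refine (Derives.refl _).trans_produces ?_
        simpa [liftStr_cons, liftSym, liftStr_append] using step

end CycAux

namespace CycAux
open ContextFreeGrammar

variable {T : Type} {g : ContextFreeGrammar.{0} T}

lemma derives_append {s₁ s₂ t₁ t₂ : List (Symbol T g.NT)} (h₁ : g.Derives s₁ t₁)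
    (h₂ : g.Derives s₂ t₂) : g.Derives (s₁ ++ s₂) (t₁ ++ t₂) :=
  (h₁.append_right s₂).trans (h₂.append_left t₁)

lemma map_terminal_eq_append {w : List T} {p q : List (Symbol T g.NT)}
    (h : List.map Symbol.terminal w = p ++ q) :
    ∃ w₁ w₂, w = w₁ ++ w₂ ∧ p = List.map Symbol.terminal w₁ ∧ q = List.map Symbol.terminal w₂ := by
  obtain ⟨w₁, w₂, rfl, h₁, h₂⟩ := List.map_eq_append_iff.mp h
  exact ⟨w₁, w₂, rfl, h₁.symm, h₂.symm⟩

lemma pivot_split : ∀ (γ : List (Symbol T g.NT)) {n : ℕ} {x y : List T} {a : T},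
    DerivesIn g γ (List.map .terminal x ++ Symbol.terminal a :: List.map .terminal y) n →
    ∃ α c β x₁ x₂ y₁ y₂ n', γ = α ++ c :: β ∧ x = x₁ ++ x₂ ∧ y = y₁ ++ y₂ ∧
      g.Derives α (x₁.map .terminal) ∧
      DerivesIn g [c] (List.map .terminal x₂ ++ Symbol.terminal a :: List.map .terminal y₁) n' ∧
      n' ≤ n ∧ g.Derives β (y₂.map .terminal) := by
  intro γ
  induction γ with
  | nil =>
      intro n x y a h
      have := h.nil
      rcases x with - | ⟨b, x⟩ <;> simp at this
  | cons c₀ γ' ih =>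
      intro n x y a h
      obtain ⟨w₁, w₂, n₁, n₂, hw, hn, h1, h2⟩ :=
        DerivesIn.append_split (show DerivesIn g ([c₀] ++ γ') _ n from h)
      rcases three_way (show List.map Symbol.terminal x ++ Symbol.terminal a ::
          List.map Symbol.terminal y = w₁ ++ w₂ ++ [] by simpa using hw) with
        ⟨u₂, hw₁, hy⟩ | ⟨α₂, β₂, hw₂, hx, hy⟩ | ⟨v₁, hq, -⟩
      · rw [List.append_nil] at hy
        obtain ⟨y₁, y₂, rfl, rfl, rfl⟩ := map_terminal_eq_append hy
        subst hw₁
        exact ⟨[], c₀, γ', [], x, y₁, y₂, n₁, rfl, rfl, rfl, Derives.refl _, h1, by omega,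
          h2.derives⟩
      · rw [List.append_nil] at hy
        obtain ⟨x₁, x₂, rfl, rfl, rfl⟩ := map_terminal_eq_append hx
        subst hw₂
        subst hy
        obtain ⟨α'', c'', β'', x₁'', x₂'', y₁'', y₂'', n'', hγ, hx2, hy2, hα, hc, hle, hβ⟩ :=
          ih h2
        refine ⟨c₀ :: α'', c'', β'', x₁ ++ x₁'', x₂'', y₁'', y₂'', n'', by simp [hγ], ?_, hy2,
          ?_, hc, by omega, hβ⟩
        · simp [hx2]
        · have := derives_append h1.derives hα
          simpa using this
      · exact absurd hq (by simp)

lemma produces_self {r : ContextFreeRule T g.NT} (hr : r ∈ g.rules) {A : g.NT}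
    (hA : r.input = A) : g.Produces [Symbol.nonterminal A] r.output :=
  ⟨r, hr, hA ▸ ContextFreeRule.Rewrites.input_output⟩

lemma pivot_trace : ∀ {n : ℕ} {A : g.NT} {x y : List T} {a : T},
    DerivesIn g [.nonterminal A] (List.map .terminal x ++ Symbol.terminal a ::
      List.map .terminal y) n →
    ∃ B α β x₁ x₂ y₁ y₂, x = x₁ ++ x₂ ∧ y = y₁ ++ y₂ ∧
      (⟨B, α ++ Symbol.terminal a :: β⟩ : ContextFreeRule T g.NT) ∈ g.rules ∧
      g.Derives [.nonterminal A]
        (x₁.map .terminal ++ Symbol.nonterminal B :: y₂.map .terminal) ∧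
      g.Derives α (x₂.map .terminal) ∧ g.Derives β (y₁.map .terminal) := by
  intro n
  induction n using Nat.strong_induction_on with
  | _ n IH =>
      intro A x y a h
      rcases h.nonterminal_cases with heq | ⟨r, hr, hin, m, rfl, hout⟩
      · exfalso
        rcases x with - | ⟨b, x⟩ <;> simp at heq
      · obtain ⟨α, c, β, x₁, x₂, y₁, y₂, n', hγ, rfl, rfl, hα, hc, hle, hβ⟩ :=
          pivot_split r.output hout
        rcases c with t | C
        · -- the pivot letter is directly in the output of r
          have hterm := hc.terminal
          rcases x₂ with - | ⟨b, x₂⟩ <;> simp at hterm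
          obtain ⟨rfl, hy₁⟩ := hterm
          have hy₁' : y₁ = [] := by
            rcases y₁ with - | ⟨b, y₁⟩
            · rfl
            · simp at hy₁
          subst hy₁'
          have hrule : (⟨A, α ++ Symbol.terminal a :: β⟩ : ContextFreeRule T g.NT) ∈ g.rules := by
            have : r = ⟨A, α ++ Symbol.terminal a :: β⟩ := by
              cases r; simp_all
            exact this ▸ hr
          exact ⟨A, α, β, [], x₁, y₂, [], by simp, by simp, hrule,
            by simpa using Derives.refl ([Symbol.nonterminal A] : List (Symbol T g.NT)), hα,
            by simpa using hβ⟩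
        · -- the pivot letter is deeper, inside C
          obtain ⟨B, α', β', x₁', x₂', y₁', y₂', rfl, rfl, hrule, hB, hα', hβ'⟩ :=
            IH n' (by omega) hc
          refine ⟨B, α', β', x₁ ++ x₁', x₂', y₁', y₂' ++ y₂, by simp, by simp, hrule, ?_, hα', hβ'⟩
          refine (produces_self hr hin).trans_derives ?_
          rw [hγ]
          have := derives_append (derives_append hα hB) hβ
          simpa using this

end CycAux

namespace CycAux
open ContextFreeGrammar

variable {T : Type} {g : ContextFreeGrammar.{0} T}

lemma inr_complete : ∀ {n : ℕ} {A : g.NT} {m : List T},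
    DerivesIn (cycG g) [.nonterminal (some (Sum.inr A))] (m.map .terminal) n →
    ∃ u v : List T, m = v ++ u ∧
      g.Derives [.nonterminal g.initial]
        (u.map .terminal ++ Symbol.nonterminal A :: v.map .terminal) := by
  intro n
  induction n using Nat.strong_induction_on with
  | _ n IH =>
      intro A m h
      rcases h.nonterminal_cases with heq | ⟨r', hr', hin, m', rfl, hout⟩
      · exfalso; rcases m with - | ⟨b, m⟩ <;> simp at heq
      · rcases mem_cycG_rules.mp hr' with rfl | rfl | ⟨r, hr, rfl⟩ | ⟨r, hr, α, c, β, hsp, rfl⟩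
        · exact absurd hin (by simp)
        · injection hin with hin
          injection hin with hin
          subst hin
          have : m.map (Symbol.terminal (N := (cycG g).NT)) = [] := hout.nil
          have hm : m = [] := by simpa using this
          subst hm
          exact ⟨[], [], rfl, by simpa using Derives.refl _⟩
        · exact absurd hin (by rintro h; injection h with h; exact Sum.inl_ne_inr h)
        · rcases c with t | C
          · exact absurd hin (by simp [mkRule])
          · have hCA : C = A := by
              simp only [mkRule] at hin
              injection hin with hin
              exact Sum.inr_injective hin
            subst hCA
            simp only [mkRule] at hout
            obtain ⟨w₁, w₂₃, k₁, k₂₃, hw, hk, h₁, h₂₃⟩ :=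
              DerivesIn.append_split (show DerivesIn (cycG g)
                (liftStr β ++ (([.nonterminal (some (Sum.inr r.input))] :
                  List (Symbol T (Option (g.NT ⊕ g.NT)))) ++ liftStr α)) _ m' by
                  simpa using hout)
            obtain ⟨w₂, w₃, k₂, k₃, rfl, hk', h₂, h₃⟩ := DerivesIn.append_split h₂₃
            rw [← List.append_assoc] at hw
            obtain ⟨m₁₂, m₃, rfl, h12, h3⟩ := map_terminal_eq_append (g := cycG g) hw
            obtain ⟨m₁, m₂, rfl, h1, h2⟩ := map_terminal_eq_append (g := cycG g) h12.symm
            have hβ : g.Derives β (m₁.map .terminal) := unlift_derivesIn (h1 ▸ h₁)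
            have hα : g.Derives α (m₃.map .terminal) := unlift_derivesIn (h3 ▸ h₃)
            obtain ⟨u', v', rfl, hmain⟩ := IH k₂ (by omega) (h2 ▸ h₂)
            refine ⟨u' ++ m₃, m₁ ++ v', by simp, ?_⟩
            refine hmain.trans ?_
            have hstep : g.Produces
                (u'.map .terminal ++ [Symbol.nonterminal r.input] ++ v'.map .terminal)
                (u'.map .terminal ++ r.output ++ v'.map .terminal) :=
              ⟨r, hr, ContextFreeRule.rewrites_of_exists_parts r _ _⟩
            refine (by simpa using hstep : g.Produces _ _).trans_derives ?_
            rw [hsp]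
            have hmid : g.Derives (α ++ Symbol.nonterminal C :: β)
                (m₃.map .terminal ++ Symbol.nonterminal C :: m₁.map .terminal) := by
              have := derives_append hα
                (derives_append (Derives.refl [Symbol.nonterminal C]) hβ)
              simpa using this
            have h' := (hmid.append_left (u'.map .terminal)).append_right (v'.map .terminal)
            simpa using h'
end CycAux

namespace CycAux
open ContextFreeGrammar

variable {T : Type} {g : ContextFreeGrammar.{0} T}

lemma cycG_initial : (cycG g).initial = none := rfl

lemma cycG_sub {w : List T} (hw : w ∈ (cycG g).language) :
    ∃ x y : List T, w = y ++ x ∧ x ++ y ∈ g.language := by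
  rw [mem_language_iff, cycG_initial] at hw
  obtain ⟨n, h⟩ := Derives.derivesIn hw
  rcases h.nonterminal_cases with heq | ⟨r', hr', hin, m', rfl, hout⟩
  · exfalso; rcases w with - | ⟨b, w⟩ <;> simp at heq
  · rcases mem_cycG_rules.mp hr' with rfl | rfl | ⟨r, hr, rfl⟩ | ⟨r, hr, α, c, β, hsp, rfl⟩
    · -- start rule
      have : g.Derives [Symbol.nonterminal g.initial] (w.map .terminal) :=
        unlift_derivesIn (show DerivesIn (cycG g)
          (liftStr [Symbol.nonterminal g.initial]) _ m' from hout)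
      exact ⟨w, [], by simp, by simpa using this⟩
    · exact absurd hin (by simp)
    · exact absurd hin (by simp)
    · rcases c with a | C
      · -- top pivot rule
        simp only [mkRule] at hout
        obtain ⟨w₀, w₁₂₃, k₀, k₁₂₃, hw, hk, h₀, h₁₂₃⟩ :=
          DerivesIn.append_split (show DerivesIn (cycG g)
            (([.terminal a] : List (Symbol T (Option (g.NT ⊕ g.NT)))) ++
              (liftStr β ++ (([.nonterminal (some (Sum.inr r.input))] :
                List (Symbol T (Option (g.NT ⊕ g.NT)))) ++ liftStr α))) _ m' by
              simpa using hout)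
        obtain ⟨w₁, w₂₃, k₁, k₂₃, rfl, hk1, h₁, h₂₃⟩ := DerivesIn.append_split h₁₂₃
        obtain ⟨w₂, w₃, k₂, k₃, rfl, hk2, h₂, h₃⟩ := DerivesIn.append_split h₂₃
        have hw₀ : w₀ = [Symbol.terminal a] := h₀.terminal
        subst hw₀
        rw [show ([Symbol.terminal a] : List (Symbol T (cycG g).NT)) ++ (w₁ ++ (w₂ ++ w₃)) =
          Symbol.terminal a :: (w₁ ++ (w₂ ++ w₃)) from rfl] at hw
        obtain ⟨b, w', rfl, hb, hw'⟩ := List.map_eq_cons_iff.mp hw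
        have hb' : b = a := by simpa using hb
        subst hb'
        obtain ⟨m₁, m₂₃, rfl, hm1, hm23⟩ := map_terminal_eq_append (g := cycG g) hw'
        obtain ⟨m₂, m₃, rfl, hm2, hm3⟩ := map_terminal_eq_append (g := cycG g) hm23.symm
        have hβ : g.Derives β (m₁.map .terminal) := unlift_derivesIn (hm1 ▸ h₁)
        have hα : g.Derives α (m₃.map .terminal) := unlift_derivesIn (hm3 ▸ h₃)
        obtain ⟨u', v', rfl, hmain⟩ := inr_complete (hm2 ▸ h₂)
        refine ⟨u' ++ m₃, b :: (m₁ ++ v'), by simp, ?_⟩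
        rw [mem_language_iff]
        have hstep : g.Produces
            (u'.map .terminal ++ [Symbol.nonterminal r.input] ++ v'.map .terminal)
            (u'.map .terminal ++ r.output ++ v'.map .terminal) :=
          ⟨r, hr, ContextFreeRule.rewrites_of_exists_parts r _ _⟩
        have hmid : g.Derives (α ++ Symbol.terminal b :: β)
            (m₃.map .terminal ++ Symbol.terminal b :: m₁.map .terminal) := by
          have := derives_append hα (derives_append (Derives.refl [Symbol.terminal b]) hβ)
          simpa using this
        have h' := (hmid.append_left (u'.map .terminal)).append_right (v'.map .terminal)
        refine (hmain.trans_produces (by simpa using hstep)).trans ?_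
        rw [hsp]
        simpa using h'
      · exact absurd hin (by simp [mkRule])

lemma cycG_sup {x y : List T} (hxy : x ++ y ∈ g.language) :
    y ++ x ∈ (cycG g).language := by
  rw [mem_language_iff, cycG_initial]
  rcases y with - | ⟨a, y'⟩
  · have hfirst : (cycG g).Produces [Symbol.nonterminal none]
        [Symbol.nonterminal (some (Sum.inl g.initial))] :=
      ⟨⟨none, [.nonterminal (some (Sum.inl g.initial))]⟩, mem_cycG_rules.mpr (.inl rfl),
        ContextFreeRule.Rewrites.input_output⟩
    refine hfirst.trans_derives ?_
    rw [mem_language_iff] at hxy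
    have := lift_derives (show g.Derives [Symbol.nonterminal g.initial]
      ((x ++ []).map Symbol.terminal) from hxy)
    rw [liftStr_terminal_word] at this
    simpa [liftStr, liftSym] using this
  · rw [mem_language_iff] at hxy
    obtain ⟨n, h⟩ := Derives.derivesIn hxy
    have h' : DerivesIn g [Symbol.nonterminal g.initial]
        (List.map .terminal x ++ Symbol.terminal a :: List.map .terminal y') n := by
      simpa using h
    obtain ⟨B, α, β, x₁, x₂, y₁, y₂, rfl, rfl, hrule, hB, hα, hβ⟩ := pivot_trace h'
    obtain ⟨k, hk⟩ := Derives.derivesIn hB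
    have hctx := context_derives hk
    rw [liftStr_terminal_word, liftStr_terminal_word] at hctx
    have hmem : mkRule B (α, Symbol.terminal a, β) ∈ (cycG g).rules :=
      mem_cycG_rules.mpr (.inr (.inr (.inr ⟨⟨B, α ++ Symbol.terminal a :: β⟩, hrule,
        α, _, β, rfl, rfl⟩)))
    have hfirst : (cycG g).Produces [Symbol.nonterminal none]
        (Symbol.terminal a :: (liftStr β ++ [.nonterminal (some (Sum.inr B))] ++ liftStr α)) :=
      ⟨_, hmem, ContextFreeRule.Rewrites.input_output⟩
    refine hfirst.trans_derives ?_
    have h1 := lift_derives hβ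
    rw [liftStr_terminal_word] at h1
    have h2 := lift_derives hα
    rw [liftStr_terminal_word] at h2
    have big := derives_append (g := cycG g)
      (Derives.refl [Symbol.terminal a])
      (derives_append h1 (derives_append hctx h2))
    simpa using big

end CycAux

theorem cyclic_permutations_contextFree {T : Type} [Fintype T] (L : Language T)
    (hL : L.IsContextFree) :
    Language.IsContextFree {w : List T | ∃ x y : List T, w = y ++ x ∧ x ++ y ∈ L} := by
  obtain ⟨g, rfl⟩ := hL
  refine ⟨CycAux.cycG g, ?_⟩
  ext w
  constructor
  · intro hw
    exact CycAux.cycG_sub hw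
  · rintro ⟨x, y, rfl, hxy⟩
    exact CycAux.cycG_sup hxy
end

section
/- Let G be a group and X a finite subset of G with 1 ∉ X and Subgroup.closure X = ⊤. Then the subgroup of Equiv.Perm G generated by the left translations Equiv.mulLeft x for x ∈ X together with the transpositions Equiv.swap 1 x for x ∈ X is exactly H(G), i.e. its carrier is the set of all permutations σ of G for which there exists g ∈ G with {y : G | σ y ≠ g * y} finite. -/
open Equiv

private lemma swap_conj' {G : Type*} [Group G] [DecidableEq G] (σ : Equiv.Perm G) (a b : G) :
    σ * Equiv.swap a b * σ⁻¹ = Equiv.swap (σ a) (σ b) :=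
  (Equiv.swap_apply_apply σ a b).symm

/-- Finitary permutations are in any subgroup containing all swaps. -/
private lemma finitary_mem {G : Type*} [Group G] [DecidableEq G]
    (S : Subgroup (Equiv.Perm G)) (hswap : ∀ a b : G, Equiv.swap a b ∈ S) :
    ∀ (n : ℕ) (s : Finset G), s.card ≤ n → ∀ σ : Equiv.Perm G,
      (∀ y, σ y ≠ y → y ∈ s) → σ ∈ S := by
  intro n
  induction n with
  | zero =>
    intro s hs σ hσ
    have : σ = 1 := by
      ext y
      by_contra h
      have := hσ y h
      simp [Finset.card_eq_zero.mp (Nat.le_zero.mp hs)] at this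
    rw [this]; exact S.one_mem
  | succ n ih =>
    intro s hs σ hσ
    by_cases hid : ∀ y, σ y = y
    · have : σ = 1 := by ext y; exact hid y
      rw [this]; exact S.one_mem
    · push_neg at hid
      obtain ⟨a, ha⟩ := hid
      have haS : a ∈ s := hσ a ha
      set σ' : Equiv.Perm G := Equiv.swap a (σ a) * σ with hσ'def
      have hσ'a : σ' a = a := by simp [hσ'def]
      have hsupp : ∀ y, σ' y ≠ y → y ∈ s.erase a := by
        intro y hy
        have hya : y ≠ a := fun h => hy (h ▸ hσ'a)
        rcases eq_or_ne (σ y) y with h | h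
        · exfalso
          apply hy
          have h1 : y ≠ σ a := by
            intro he
            exact ha (σ.injective (by rw [← he, h]))
          simp [hσ'def, h, Equiv.swap_apply_of_ne_of_ne hya h1]
        · exact Finset.mem_erase.mpr ⟨hya, hσ y h⟩
      have hcard : (s.erase a).card ≤ n := by
        have := Finset.card_erase_of_mem haS
        omega
      have hσ'S : σ' ∈ S := ih (s.erase a) hcard σ' hsupp
      have : σ = Equiv.swap a (σ a) * σ' := by
        rw [hσ'def, ← mul_assoc, Equiv.swap_mul_self, one_mul]
      rw [this]
      exact S.mul_mem (hswap a (σ a)) hσ'S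

theorem closure_translations_and_swaps_eq_HG (G : Type*) [Group G] [DecidableEq G]
    (X : Finset G) (h1 : (1 : G) ∉ X)
    (hX : Subgroup.closure (X : Set G) = ⊤) :
    ((Subgroup.closure
        ((fun x : G => Equiv.mulLeft x) '' (X : Set G) ∪
          (fun x : G => Equiv.swap (1 : G) x) '' (X : Set G))) :
      Set (Equiv.Perm G)) =
    {σ : Equiv.Perm G | ∃ g : G, {y : G | σ y ≠ g * y}.Finite} := by
  set S := Subgroup.closure
      ((fun x : G => Equiv.mulLeft x) '' (X : Set G) ∪
        (fun x : G => Equiv.swap (1 : G) x) '' (X : Set G)) with hSdef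
  -- Lemma B : all left translations are in S
  have hmulLeft : ∀ g : G, Equiv.mulLeft g ∈ S := by
    intro g
    have hg : g ∈ Subgroup.closure (X : Set G) := hX ▸ Subgroup.mem_top g
    induction hg using Subgroup.closure_induction with
    | mem x hx => exact Subgroup.subset_closure (Or.inl ⟨x, hx, rfl⟩)
    | one => rw [Equiv.mulLeft_one]; exact S.one_mem
    | mul x y _ _ hx hy => rw [Equiv.mulLeft_mul]; exact S.mul_mem hx hy
    | inv x _ hx =>
      have : Equiv.mulLeft x⁻¹ = (Equiv.mulLeft x)⁻¹ := by
        ext y; simp [Equiv.Perm.inv_def]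
      rw [this]; exact S.inv_mem hx
  -- Lemma A : swap 1 g ∈ S for all g
  have hswap1 : ∀ g : G, Equiv.swap (1 : G) g ∈ S := by
    intro g
    have hg : g ∈ Subgroup.closure (X : Set G) := hX ▸ Subgroup.mem_top g
    induction hg using Subgroup.closure_induction with
    | mem x hx => exact Subgroup.subset_closure (Or.inr ⟨x, hx, rfl⟩)
    | one => rw [Equiv.swap_self]; exact S.one_mem
    | mul g h _ _ hg hh =>
      -- swap(g, g*h) = L_g * swap(1,h) * L_g⁻¹
      have hgh : Equiv.swap g (g * h) ∈ S := by
        have : Equiv.swap g (g * h) =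
            Equiv.mulLeft g * Equiv.swap (1 : G) h * (Equiv.mulLeft g)⁻¹ := by
          rw [swap_conj']
          simp
        rw [this]
        exact S.mul_mem (S.mul_mem (hmulLeft g) hh) (S.inv_mem (hmulLeft g))
      rcases eq_or_ne (g * h) 1 with he | hne
      · rw [he, Equiv.swap_self]; exact S.one_mem
      · rcases eq_or_ne (g * h) g with he2 | hne2
        · rw [he2]; exact hg
        · have : Equiv.swap (1 : G) (g * h) =
              Equiv.swap (1 : G) g * Equiv.swap g (g * h) * (Equiv.swap (1 : G) g)⁻¹ := by
            rw [swap_conj', Equiv.swap_apply_right,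
              Equiv.swap_apply_of_ne_of_ne hne hne2]
          rw [this]
          exact S.mul_mem (S.mul_mem hg hgh) (S.inv_mem hg)
    | inv g _ hg =>
      have : Equiv.swap (1 : G) g⁻¹ =
          Equiv.mulLeft g⁻¹ * Equiv.swap (1 : G) g * (Equiv.mulLeft g⁻¹)⁻¹ := by
        rw [swap_conj']
        simp [Equiv.swap_comm]
      rw [this]
      exact S.mul_mem (S.mul_mem (hmulLeft g⁻¹) hg) (S.inv_mem (hmulLeft g⁻¹))
  -- all swaps in S
  have hswap : ∀ a b : G, Equiv.swap a b ∈ S := by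
    intro a b
    have : Equiv.swap a b =
        Equiv.mulLeft a * Equiv.swap (1 : G) (a⁻¹ * b) * (Equiv.mulLeft a)⁻¹ := by
      rw [swap_conj']
      simp
    rw [this]
    exact S.mul_mem (S.mul_mem (hmulLeft a) (hswap1 (a⁻¹ * b))) (S.inv_mem (hmulLeft a))
  ext σ
  simp only [SetLike.mem_coe, Set.mem_setOf_eq]
  constructor
  · -- forward : S ⊆ HG
    intro hσ
    induction hσ using Subgroup.closure_induction with
    | mem π hπ =>
      rcases hπ with ⟨x, _, rfl⟩ | ⟨x, _, rfl⟩
      · exact ⟨x, by simp⟩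
      · refine ⟨1, Set.Finite.subset ((Set.finite_singleton x).insert 1) ?_⟩
        intro y hy
        simp only [Set.mem_setOf_eq, one_mul] at hy
        by_contra hc
        simp only [Set.mem_insert_iff, Set.mem_singleton_iff] at hc
        push_neg at hc
        exact hy (Equiv.swap_apply_of_ne_of_ne hc.1 hc.2)
    | one => exact ⟨1, by simp⟩
    | mul π τ _ _ hπ hτ =>
      obtain ⟨g, hg⟩ := hπ
      obtain ⟨h, hh⟩ := hτ
      refine ⟨g * h, Set.Finite.subset (hh.union (hg.preimage
        (Set.injOn_of_injective τ.injective))) ?_⟩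
      intro y hy
      simp only [Set.mem_setOf_eq, Equiv.Perm.mul_apply] at hy
      by_contra hc
      simp only [Set.mem_union, Set.mem_setOf_eq, Set.mem_preimage] at hc
      push_neg at hc
      rw [hc.2, hc.1, mul_assoc] at hy
      exact hy rfl
    | inv π _ hπ =>
      obtain ⟨g, hg⟩ := hπ
      refine ⟨g⁻¹, Set.Finite.subset (hg.image π) ?_⟩
      intro y hy
      simp only [Set.mem_setOf_eq] at hy
      refine ⟨π⁻¹ y, ?_, by simp⟩
      simp only [Set.mem_setOf_eq]
      intro hc
      apply hy
      simp only [Equiv.Perm.inv_def, Equiv.apply_symm_apply] at hc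
      exact eq_inv_mul_iff_mul_eq.mpr hc.symm
  · -- backward : HG ⊆ S
    rintro ⟨g, hg⟩
    have key : σ = Equiv.mulLeft g * ((Equiv.mulLeft g)⁻¹ * σ) := by
      rw [← mul_assoc, mul_inv_cancel, one_mul]
    rw [key]
    refine S.mul_mem (hmulLeft g) ?_
    have hsub : ∀ y, ((Equiv.mulLeft g)⁻¹ * σ) y ≠ y → y ∈ hg.toFinset := by
      intro y hy
      rw [Set.Finite.mem_toFinset]
      simp only [Set.mem_setOf_eq]
      intro hc
      apply hy
      simp [Equiv.Perm.mul_apply, Equiv.Perm.inv_def, hc]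
    exact finitary_mem S hswap hg.toFinset.card hg.toFinset le_rfl _ hsub
end

section
/- Fix n ≥ 2 and let Φ be a quasi-automorphism of the n-star *_0^n (vertex set Fin n × ℕ with adjacency (i,k) ~ (j,l) iff i = j and (l = k + 1 or k = l + 1)). Then there exist r : ℕ, s : Fin n → ℤ, and a permutation φ of Fin n such that for every l : Fin n and every k > r one has (Φ (l,k)).1 = φ l and ((Φ (l,k)).2 : ℤ) = (k : ℤ) + s l; moreover ∑ l, s l = 0. -/
/-- Adjacency on the `n`-star `*_0^n`: `(i,k) ~ (j,l)` iff `i = j` and the levels are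
consecutive. -/
def StarAdj {n : ℕ} (u v : Fin n × ℕ) : Prop :=
  u.1 = v.1 ∧ (v.2 = u.2 + 1 ∨ u.2 = v.2 + 1)

theorem quasiAut_star_eventually_shift (n : ℕ) (hn : 2 ≤ n)
    (Φ : Equiv.Perm (Fin n × ℕ))
    (hΦ : {p : (Fin n × ℕ) × (Fin n × ℕ) |
            ¬ (StarAdj p.1 p.2 ↔ StarAdj (Φ p.1) (Φ p.2))}.Finite) :
    ∃ (r : ℕ) (s : Fin n → ℤ) (φ : Equiv.Perm (Fin n)),
      (∀ (l : Fin n) (k : ℕ), r < k →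
        (Φ (l, k)).1 = φ l ∧ ((Φ (l, k)).2 : ℤ) = (k : ℤ) + s l) ∧
      (∑ l, s l) = 0 := by
  classical
  set F := hΦ.toFinset with hF
  set R : ℕ := F.sup (fun p => max p.1.2 p.2.2) + 1 with hRdef
  have key : ∀ u v : Fin n × ℕ, R ≤ max u.2 v.2 →
      (StarAdj u v ↔ StarAdj (Φ u) (Φ v)) := by
    intro u v h
    by_contra hc
    have hm : (u, v) ∈ F := hΦ.mem_toFinset.mpr hc
    have hle := Finset.le_sup
      (f := fun p : (Fin n × ℕ) × (Fin n × ℕ) => max p.1.2 p.2.2) hm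
    simp only at hle
    omega
  have adj : ∀ (l : Fin n) (k : ℕ), R ≤ k →
      (Φ (l, k)).1 = (Φ (l, k + 1)).1 ∧
      ((Φ (l, k + 1)).2 = (Φ (l, k)).2 + 1 ∨ (Φ (l, k)).2 = (Φ (l, k + 1)).2 + 1) := by
    intro l k hk
    have h1 : StarAdj ((l, k) : Fin n × ℕ) (l, k + 1) := ⟨rfl, Or.inl rfl⟩
    exact (key (l, k) (l, k + 1) (by show R ≤ max k (k + 1); omega)).mp h1
  have step_up : ∀ (l : Fin n) (k : ℕ), R ≤ k →
      (Φ (l, k + 1)).2 = (Φ (l, k)).2 + 1 →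
      (Φ (l, k + 1 + 1)).2 = (Φ (l, k + 1)).2 + 1 := by
    intro l k hk hup
    rcases (adj l (k + 1) (by omega)).2 with h | h
    · exact h
    · exfalso
      have hb1 := (adj l k hk).1
      have hb2 := (adj l (k + 1) (by omega)).1
      have heq : Φ (l, k + 1 + 1) = Φ (l, k) := by
        apply Prod.ext
        · rw [← hb2, ← hb1]
        · omega
      have := Φ.injective heq
      simp [Prod.ext_iff] at this
      omega
  have step_down : ∀ (l : Fin n) (k : ℕ), R ≤ k →
      (Φ (l, k)).2 = (Φ (l, k + 1)).2 + 1 →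
      (Φ (l, k + 1)).2 = (Φ (l, k + 1 + 1)).2 + 1 := by
    intro l k hk hdn
    rcases (adj l (k + 1) (by omega)).2 with h | h
    · exfalso
      have hb1 := (adj l k hk).1
      have hb2 := (adj l (k + 1) (by omega)).1
      have heq : Φ (l, k + 1 + 1) = Φ (l, k) := by
        apply Prod.ext
        · rw [← hb2, ← hb1]
        · omega
      have := Φ.injective heq
      simp [Prod.ext_iff] at this
      omega
    · exact h
  have not_down : ∀ l : Fin n, ¬ (Φ (l, R)).2 = (Φ (l, R + 1)).2 + 1 := by
    intro l hdown
    have all_down : ∀ j, (Φ (l, R + j)).2 = (Φ (l, R + j + 1)).2 + 1 := by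
      intro j
      induction j with
      | zero => exact hdown
      | succ j ih => exact step_down l (R + j) (by omega) ih
    have decr : ∀ j, (Φ (l, R + j)).2 + j ≤ (Φ (l, R)).2 := by
      intro j
      induction j with
      | zero => simp
      | succ j ih =>
        have h := all_down j
        have e : R + (j + 1) = R + j + 1 := by omega
        rw [e]
        omega
    have := decr ((Φ (l, R)).2 + 1)
    omega
  have up : ∀ (l : Fin n) (k : ℕ), R ≤ k →
      (Φ (l, k + 1)).2 = (Φ (l, k)).2 + 1 := by
    intro l k hk
    induction k, hk using Nat.le_induction with
    | base =>
      rcases (adj l R le_rfl).2 with h | h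
      · exact h
      · exact absurd h (not_down l)
    | succ k hk ih => exact step_up l k hk ih
  have branch : ∀ (l : Fin n) (k : ℕ), R ≤ k → (Φ (l, k)).1 = (Φ (l, R)).1 := by
    intro l k hk
    induction k, hk using Nat.le_induction with
    | base => rfl
    | succ k hk ih => rw [← (adj l k hk).1]; exact ih
  have level : ∀ (l : Fin n) (k : ℕ), R ≤ k →
      ((Φ (l, k)).2 : ℤ) = (k : ℤ) + (((Φ (l, R)).2 : ℤ) - (R : ℤ)) := by
    intro l k hk
    induction k, hk using Nat.le_induction with
    | base => omega
    | succ k hk ih =>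
      have h := up l k hk
      omega
  set c : Fin n → Fin n := fun l => (Φ (l, R)).1 with hcdef
  have cinj : Function.Injective c := by
    intro l l' hll
    by_contra hne
    set k := R + ((((Φ (l', R)).2 : ℤ) - ((Φ (l, R)).2 : ℤ)).toNat) with hk
    set k' := R + ((((Φ (l, R)).2 : ℤ) - ((Φ (l', R)).2 : ℤ)).toNat) with hk'
    have h1 : Φ (l, k) = Φ (l', k') := by
      apply Prod.ext
      · rw [branch l k (by omega), branch l' k' (by omega)]
        exact hll
      · have e1 := level l k (by omega)
        have e2 := level l' k' (by omega)
        have : ((Φ (l, k)).2 : ℤ) = ((Φ (l', k')).2 : ℤ) := by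
          rw [e1, e2, hk, hk']
          push_cast
          omega
        exact_mod_cast this
    have h2 := Φ.injective h1
    rw [Prod.ext_iff] at h2
    exact hne h2.1
  have cbij : Function.Bijective c := Finite.injective_iff_bijective.mp cinj
  set φ : Equiv.Perm (Fin n) := Equiv.ofBijective c cbij with hφdef
  have hφc : ∀ l, φ l = c l := fun _ => rfl
  refine ⟨R, fun l => (((Φ (l, R)).2 : ℤ) - (R : ℤ)), φ, ?_, ?_⟩
  · intro l k hk
    exact ⟨branch l k (by omega), level l k (by omega)⟩
  · -- the counting argument
    set s : Fin n → ℤ := fun l => (((Φ (l, R)).2 : ℤ) - (R : ℤ)) with hsdef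
    show ∑ l, s l = 0
    have hslb : ∀ l, -(R : ℤ) ≤ s l := by
      intro l
      simp only [hsdef]
      omega
    set M₀ : ℕ := (Finset.univ ×ˢ Finset.range R).sup (fun p => (Φ p).2) with hM₀def
    have hM : ∀ (l : Fin n) (k : ℕ), k < R → (Φ (l, k)).2 ≤ M₀ := by
      intro l k hk
      exact Finset.le_sup (f := fun p => (Φ p).2)
        (Finset.mem_product.mpr ⟨Finset.mem_univ _, Finset.mem_range.mpr hk⟩)
    set N : ℕ := R + M₀ with hNdef
    set K : Fin n → ℕ := fun i => ((N : ℤ) + 1 + s (φ.symm i)).toNat with hKdef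
    have hK : ∀ i, (K i : ℤ) = (N : ℤ) + 1 + s (φ.symm i) := by
      intro i
      have h1 := hslb (φ.symm i)
      simp only [hKdef]
      omega
    set A : Finset (Fin n × ℕ) := Finset.univ ×ˢ Finset.range (N + 1) with hAdef
    set C : Finset (Fin n × ℕ) :=
      Finset.univ.biUnion (fun i => {i} ×ˢ Finset.range (K i)) with hCdef
    have hΦsymm_level : ∀ q : Fin n × ℕ, N < (Φ.symm q).2 →
        q.1 = φ (Φ.symm q).1 ∧ ((q.2 : ℤ) = ((Φ.symm q).2 : ℤ) + s (Φ.symm q).1) := by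
      intro q hq
      have hq' : Φ ((Φ.symm q).1, (Φ.symm q).2) = q := by
        rw [Prod.mk.eta]; exact Φ.apply_symm_apply q
      have hb := branch (Φ.symm q).1 (Φ.symm q).2 (by omega)
      have hl := level (Φ.symm q).1 (Φ.symm q).2 (by omega)
      rw [hq'] at hb hl
      exact ⟨by rw [hb, hφc], by simp only [hsdef]; exact hl⟩
    have memA : ∀ p ∈ A, Φ p ∈ C := by
      intro p hp
      rw [hAdef, Finset.mem_product, Finset.mem_range] at hp
      rw [hCdef, Finset.mem_biUnion]
      refine ⟨(Φ p).1, Finset.mem_univ _, ?_⟩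
      rw [Finset.mem_product, Finset.mem_range]
      refine ⟨Finset.mem_singleton_self _, ?_⟩
      rcases le_or_gt R p.2 with hR2 | hR2
      · have hb := branch p.1 p.2 hR2
        have hl := level p.1 p.2 hR2
        rw [Prod.mk.eta] at hb hl
        have hsymm : φ.symm (Φ p).1 = p.1 := by
          rw [hb]; exact φ.symm_apply_apply p.1
        have hKe := hK (Φ p).1
        rw [hsymm] at hKe
        have hs1 : s p.1 = (((Φ (p.1, R)).2 : ℤ) - (R : ℤ)) := by rw [hsdef]
        omega
      · have h1 := hM p.1 p.2 hR2
        rw [Prod.mk.eta] at h1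
        have hKe := hK (Φ p).1
        have h2 := hslb (φ.symm (Φ p).1)
        omega
    have memC : ∀ q ∈ C, Φ.symm q ∈ A := by
      intro q hq
      rw [hCdef, Finset.mem_biUnion] at hq
      obtain ⟨i, -, hq⟩ := hq
      rw [Finset.mem_product, Finset.mem_range, Finset.mem_singleton] at hq
      obtain ⟨hq1, hq2⟩ := hq
      rw [hAdef, Finset.mem_product, Finset.mem_range]
      refine ⟨Finset.mem_univ _, ?_⟩
      by_contra hlarge
      push_neg at hlarge
      have hNlt : N < (Φ.symm q).2 := by omega
      obtain ⟨hb, hl⟩ := hΦsymm_level q hNlt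
      have hsymm : φ.symm i = (Φ.symm q).1 := by
        rw [← hq1, hb]; exact φ.symm_apply_apply _
      have hKe := hK i
      rw [hsymm] at hKe
      omega
    have hcard : A.card = C.card := by
      refine Finset.card_nbij' (fun p => Φ p) (fun q => Φ.symm q) memA memC ?_ ?_
      · intro a _; simp
      · intro a _; simp
    have cardA : A.card = n * (N + 1) := by
      rw [hAdef, Finset.card_product, Finset.card_univ, Finset.card_range,
        Fintype.card_fin]
    have cardC : C.card = ∑ i, K i := by
      rw [hCdef]
      rw [Finset.card_biUnion]
      · refine Finset.sum_congr rfl fun i _ => ?_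
        rw [Finset.card_product, Finset.card_singleton, Finset.card_range, one_mul]
      · intro i _ j _ hij
        rw [Function.onFun, Finset.disjoint_left]
        intro p hp hp'
        rw [Finset.mem_product, Finset.mem_singleton] at hp hp'
        exact hij (hp.1 ▸ hp'.1 ▸ rfl)
    have hsum : ((n * (N + 1) : ℕ) : ℤ) = ∑ i, (K i : ℤ) := by
      rw [← Nat.cast_sum]
      exact_mod_cast cardA ▸ cardC ▸ congrArg (fun m : ℕ => (m : ℤ)) hcard
    have hsum2 : ∑ i, (K i : ℤ) = (n : ℤ) * ((N : ℤ) + 1) + ∑ i, s (φ.symm i) := by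
      rw [Finset.sum_congr rfl (fun i _ => hK i)]
      rw [Finset.sum_add_distrib, Finset.sum_const, Finset.card_univ, Fintype.card_fin,
        nsmul_eq_mul]
    have hre : ∑ i, s (φ.symm i) = ∑ l, s l := Equiv.sum_comp φ.symm s
    rw [hsum2, hre] at hsum
    push_cast at hsum
    linarith
end

section
/- Fix n ≥ 3. In Equiv.Perm (Option (Fin n × ℕ)), the subgroup generated by the shifts s_0, …, s_{n-1} is exactly the Houghton group H_n in the star-with-center model: its carrier is the set of all permutations σ for which there exist N : ℕ and s : Fin n → ℤ with ∑ i, s i = 0 such that for every i : Fin n and every k ≥ N, σ (some (i,k)) = some (i, m) with (m : ℤ) = (k : ℤ) + s i. -/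
/-- Modular successor on `Fin n`. -/
def fsucc {n : ℕ} (i : Fin n) : Fin n :=
  ⟨(i.val + 1) % n, Nat.mod_lt _ (Nat.lt_of_le_of_lt (Nat.zero_le _) i.isLt)⟩

lemma fsucc_ne {n : ℕ} (hn : 2 ≤ n) (i : Fin n) : fsucc i ≠ i := by
  rcases Nat.lt_or_ge (i.val + 1) n with h | h
  · intro he
    have : (i.val + 1) % n = i.val := congrArg Fin.val he
    rw [Nat.mod_eq_of_lt h] at this
    omega
  · intro he
    have hi := i.isLt
    have hn1 : i.val + 1 = n := by omega
    have : (i.val + 1) % n = i.val := congrArg Fin.val he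
    rw [hn1, Nat.mod_self] at this
    omega

/-- The underlying function of the shift `s_i` on the star `*^n` with center `none`. -/
def shiftFun {n : ℕ} (i : Fin n) : Option (Fin n × ℕ) → Option (Fin n × ℕ)
  | none => some (fsucc i, 0)
  | some (l, k) =>
      if l = i then (match k with | 0 => none | Nat.succ k' => some (i, k'))
      else if l = fsucc i then some (fsucc i, k + 1)
      else some (l, k)

/-- The inverse of `shiftFun i`. -/
def shiftInvFun {n : ℕ} (i : Fin n) : Option (Fin n × ℕ) → Option (Fin n × ℕ)
  | none => some (i, 0)
  | some (l, k) =>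
      if l = i then some (i, k + 1)
      else if l = fsucc i then (match k with | 0 => none | Nat.succ k' => some (fsucc i, k'))
      else some (l, k)

/-- The shift `s_i`, as a permutation of the star `*^n`. -/
def shift {n : ℕ} (hn : 2 ≤ n) (i : Fin n) : Equiv.Perm (Option (Fin n × ℕ)) where
  toFun := shiftFun i
  invFun := shiftInvFun i
  left_inv := by
    have hs := fsucc_ne hn i
    rintro (_ | ⟨l, k⟩)
    · simp [shiftFun, shiftInvFun, hs]
    · by_cases hl : l = i
      · subst hl
        cases k with
        | zero => simp [shiftFun, shiftInvFun]
        | succ k' => simp [shiftFun, shiftInvFun]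
      · by_cases hl2 : l = fsucc i
        · subst hl2; simp [shiftFun, shiftInvFun, hs]
        · simp [shiftFun, shiftInvFun, hl, hl2]
  right_inv := by
    have hs := fsucc_ne hn i
    rintro (_ | ⟨l, k⟩)
    · simp [shiftFun, shiftInvFun, hs]
    · by_cases hl : l = i
      · subst hl; simp [shiftFun, shiftInvFun]
      · by_cases hl2 : l = fsucc i
        · subst hl2
          cases k with
          | zero => simp [shiftFun, shiftInvFun, hs]
          | succ k' => simp [shiftFun, shiftInvFun, hs]
        · simp [shiftFun, shiftInvFun, hl, hl2]

namespace HoughtonProof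

open Equiv

variable {n : ℕ}

/-- Eventual translation property. -/
def HT (σ : Equiv.Perm (Option (Fin n × ℕ))) (s : Fin n → ℤ) : Prop :=
  ∃ N : ℕ, ∀ (i : Fin n) (k : ℕ), N ≤ k →
    ∃ m : ℕ, σ (some (i, k)) = some (i, m) ∧ (m : ℤ) = (k : ℤ) + s i

lemma HT.one : HT (1 : Equiv.Perm (Option (Fin n × ℕ))) 0 :=
  ⟨0, fun i k _ => ⟨k, rfl, by simp⟩⟩

lemma HT.mul {σ τ : Equiv.Perm (Option (Fin n × ℕ))} {s t : Fin n → ℤ}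
    (hσ : HT σ s) (hτ : HT τ t) : HT (σ * τ) (s + t) := by
  obtain ⟨Nσ, hσ⟩ := hσ
  obtain ⟨Nτ, hτ⟩ := hτ
  refine ⟨Nσ + Nτ + Finset.univ.sup (fun i => (t i).natAbs), fun i k hk => ?_⟩
  have hB : (t i).natAbs ≤ Finset.univ.sup (fun i => (t i).natAbs) :=
    Finset.le_sup (f := fun i => (t i).natAbs) (Finset.mem_univ i)
  obtain ⟨m, hm, hm2⟩ := hτ i k (by omega)
  have hmN : Nσ ≤ m := by
    have h1 : -((t i).natAbs : ℤ) ≤ t i := by rw [← Int.abs_eq_natAbs]; exact neg_abs_le _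
    omega
  obtain ⟨m', hm', hm'2⟩ := hσ i m hmN
  exact ⟨m', by simp [Equiv.Perm.mul_apply, hm, hm'], by simp [Pi.add_apply]; omega⟩

lemma HT.inv {σ : Equiv.Perm (Option (Fin n × ℕ))} {s : Fin n → ℤ}
    (hσ : HT σ s) : HT σ⁻¹ (-s) := by
  obtain ⟨N, hσ⟩ := hσ
  refine ⟨N + Finset.univ.sup (fun i => (s i).natAbs), fun i k hk => ?_⟩
  have hB : (s i).natAbs ≤ Finset.univ.sup (fun i => (s i).natAbs) :=
    Finset.le_sup (f := fun i => (s i).natAbs) (Finset.mem_univ i)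
  have h1 : -((s i).natAbs : ℤ) ≤ s i ∧ s i ≤ ((s i).natAbs : ℤ) :=
    ⟨by rw [← Int.abs_eq_natAbs]; exact neg_abs_le _, Int.le_natAbs⟩
  set m : ℕ := ((k : ℤ) - s i).toNat with hmdef
  have hm : (m : ℤ) = (k : ℤ) - s i := Int.toNat_of_nonneg (by omega)
  obtain ⟨m', hm', hm'2⟩ := hσ i m (by omega)
  have : m' = k := by omega
  subst this
  refine ⟨m, ?_, by simp [Pi.neg_apply]; omega⟩
  rw [← hm', Equiv.Perm.coe_inv, Equiv.symm_apply_apply]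

end HoughtonProof
namespace HoughtonProof

/-- Translation vector of `shift i`. -/
def tv {n : ℕ} (i : Fin n) : Fin n → ℤ :=
  fun j => (if j = i then (-1 : ℤ) else 0) + (if j = fsucc i then (1 : ℤ) else 0)

lemma tv_sum {n : ℕ} (_hn : 2 ≤ n) (i : Fin n) : (∑ j, tv i j) = 0 := by
  unfold tv
  rw [Finset.sum_add_distrib]
  rw [Finset.sum_ite_eq' Finset.univ i (fun _ => (-1 : ℤ)),
      Finset.sum_ite_eq' Finset.univ (fsucc i) (fun _ => (1 : ℤ))]
  simp

lemma shift_apply {n : ℕ} (hn : 2 ≤ n) (i : Fin n) (v : Option (Fin n × ℕ)) :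
    shift hn i v = shiftFun i v := rfl

lemma shift_inv_apply {n : ℕ} (hn : 2 ≤ n) (i : Fin n) (v : Option (Fin n × ℕ)) :
    (shift hn i)⁻¹ v = shiftInvFun i v := rfl

lemma HT.shift {n : ℕ} (hn : 2 ≤ n) (i : Fin n) : HT (shift hn i) (tv i) := by
  refine ⟨1, fun j k hk => ?_⟩
  have hs := fsucc_ne hn i
  by_cases hj : j = i
  · subst hj
    obtain ⟨k', rfl⟩ : ∃ k', k = k' + 1 := ⟨k - 1, by omega⟩
    refine ⟨k', ?_, ?_⟩
    · rw [shift_apply]; simp [shiftFun]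
    · simp [tv, Ne.symm hs]
  · by_cases hj2 : j = fsucc i
    · subst hj2
      refine ⟨k + 1, ?_, ?_⟩
      · rw [shift_apply]; simp [shiftFun, hs]
      · simp [tv, hs]
    · refine ⟨k, ?_, ?_⟩
      · rw [shift_apply]; simp [shiftFun, hj, hj2]
      · simp [tv, hj, hj2]

lemma HT.pow {n : ℕ} {σ : Equiv.Perm (Option (Fin n × ℕ))} {s : Fin n → ℤ}
    (hσ : HT σ s) (m : ℕ) : HT (σ ^ m) ((m : ℤ) • s) := by
  induction m with
  | zero => simpa using HT.one
  | succ m ih =>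
      have h := ih.mul hσ
      rw [← pow_succ] at h
      have he : ((m + 1 : ℕ) : ℤ) • s = (m : ℤ) • s + s := by
        push_cast; rw [add_smul, one_smul]
      rw [he]; exact h

lemma HT.zpow {n : ℕ} {σ : Equiv.Perm (Option (Fin n × ℕ))} {s : Fin n → ℤ}
    (hσ : HT σ s) (c : ℤ) : HT (σ ^ c) (c • s) := by
  cases c with
  | ofNat m => simpa using hσ.pow m
  | negSucc m =>
      rw [zpow_negSucc]
      have h := (hσ.pow (m + 1)).inv
      have he : (Int.negSucc m) • s = -(((m + 1 : ℕ) : ℤ) • s) := by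
        rw [Int.negSucc_eq]; push_cast; rw [neg_smul]
      rw [he]; exact h

lemma HT.listProd {n : ℕ} {ι : Type*} (l : List ι)
    (f : ι → Equiv.Perm (Option (Fin n × ℕ))) (w : ι → Fin n → ℤ)
    (h : ∀ i ∈ l, HT (f i) (w i)) :
    HT ((l.map f).prod) ((l.map w).sum) := by
  induction l with
  | nil => simpa using HT.one
  | cons a l ih =>
      simp only [List.map_cons, List.prod_cons, List.sum_cons]
      exact (h a List.mem_cons_self).mul
        (ih (fun i hi => h i (List.mem_cons_of_mem a hi)))

end HoughtonProof
namespace HoughtonProof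

/-- The subgroup generated by the shifts. -/
def G {n : ℕ} (hn : 2 ≤ n) : Subgroup (Equiv.Perm (Option (Fin n × ℕ))) :=
  Subgroup.closure (Set.range fun i : Fin n => shift hn i)

lemma shift_mem_G {n : ℕ} (hn : 2 ≤ n) (i : Fin n) : shift hn i ∈ G hn :=
  Subgroup.subset_closure ⟨i, rfl⟩

lemma fsucc_fsucc_ne {n : ℕ} (hn : 3 ≤ n) (i : Fin n) : fsucc (fsucc i) ≠ i := by
  intro he
  have h := congrArg Fin.val he
  simp only [fsucc] at h
  have hx := i.isLt
  rcases Nat.lt_or_ge (i.val + 1) n with h1 | h1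
  · rw [Nat.mod_eq_of_lt h1] at h
    rcases Nat.lt_or_ge (i.val + 1 + 1) n with h2 | h2
    · rw [Nat.mod_eq_of_lt h2] at h; omega
    · have h2' : i.val + 1 + 1 = n := by omega
      rw [h2', Nat.mod_self] at h
      omega
  · have h1' : i.val + 1 = n := by omega
    rw [h1', Nat.mod_self] at h
    rw [Nat.mod_eq_of_lt (by omega : 0 + 1 < n)] at h
    omega

lemma two_le_of_three_le {n : ℕ} (hn : 3 ≤ n) : 2 ≤ n := by omega

lemma commutator_eq_swap {n : ℕ} (hn : 3 ≤ n) (i : Fin n) :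
    (shift (two_le_of_three_le hn) i)⁻¹ * (shift (two_le_of_three_le hn) (fsucc i))⁻¹ *
      shift (two_le_of_three_le hn) i * shift (two_le_of_three_le hn) (fsucc i) =
    Equiv.swap none (some (i, 0)) := by
  have h2 : 2 ≤ n := by omega
  have e1 : fsucc i ≠ i := fsucc_ne h2 i
  have e2 : fsucc (fsucc i) ≠ fsucc i := fsucc_ne h2 _
  have e3 : fsucc (fsucc i) ≠ i := fsucc_fsucc_ne hn i
  ext v
  simp only [Equiv.Perm.mul_apply, shift_apply, shift_inv_apply]
  rcases v with _ | ⟨l, k⟩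
  · simp [shiftFun, shiftInvFun, Equiv.swap_apply_def, e1, e2, e3, e1.symm, e2.symm, e3.symm]
  · by_cases hl : l = i
    · subst hl
      cases k with
      | zero => simp [shiftFun, shiftInvFun, Equiv.swap_apply_def, e1, e2, e3, e1.symm, e2.symm, e3.symm]
      | succ k' => simp [shiftFun, shiftInvFun, Equiv.swap_apply_def, e1, e2, e3, e1.symm, e2.symm, e3.symm]
    · by_cases hl2 : l = fsucc i
      · subst hl2
        cases k with
        | zero => simp [shiftFun, shiftInvFun, Equiv.swap_apply_def, e1, e2, e3, e1.symm, e2.symm, e3.symm]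
        | succ k' => simp [shiftFun, shiftInvFun, Equiv.swap_apply_def, e1, e2, e3, e1.symm, e2.symm, e3.symm]
      · by_cases hl3 : l = fsucc (fsucc i)
        · subst hl3
          simp [shiftFun, shiftInvFun, Equiv.swap_apply_def, e1, e2, e3, e1.symm, e2.symm, e3.symm]
        · simp [shiftFun, shiftInvFun, Equiv.swap_apply_def, e1, e2, e3, hl, hl2, hl3, e1.symm, e2.symm, e3.symm]

lemma swap_center_zero_mem {n : ℕ} (hn : 3 ≤ n) (i : Fin n) :
    Equiv.swap none (some (i, 0)) ∈ G (two_le_of_three_le hn) := by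
  rw [← commutator_eq_swap hn i]
  exact mul_mem (mul_mem (mul_mem (inv_mem (shift_mem_G _ _)) (inv_mem (shift_mem_G _ _)))
    (shift_mem_G _ _)) (shift_mem_G _ _)

end HoughtonProof
namespace HoughtonProof

section Pows
variable {n : ℕ} (hn : 2 ≤ n) (i : Fin n)

lemma inv_pow_ray (m j : ℕ) :
    ((shift hn i)⁻¹ ^ m) (some (i, j)) = some (i, j + m) := by
  induction m generalizing j with
  | zero => simp
  | succ m ih =>
      rw [pow_succ, Equiv.Perm.mul_apply, shift_inv_apply]
      have : shiftInvFun i (some (i, j)) = some (i, j + 1) := by simp [shiftInvFun]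
      rw [this, ih]
      congr 2
      omega

lemma inv_pow_none (m : ℕ) :
    ((shift hn i)⁻¹ ^ (m + 1)) none = some (i, m) := by
  rw [pow_succ, Equiv.Perm.mul_apply, shift_inv_apply]
  have : shiftInvFun i (none : Option (Fin n × ℕ)) = some (i, 0) := by simp [shiftInvFun]
  rw [this, inv_pow_ray]
  simp

lemma inv_pow_succ_zero (m : ℕ) :
    ((shift hn i)⁻¹ ^ (m + 2)) (some (fsucc i, 0)) = some (i, m) := by
  have hs := fsucc_ne hn i
  have h1 : (m : ℕ) + 2 = (m + 1) + 1 := rfl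
  rw [h1, pow_succ, Equiv.Perm.mul_apply, shift_inv_apply]
  have : shiftInvFun i (some (fsucc i, 0)) = none := by simp [shiftInvFun, hs]
  rw [this, inv_pow_none]

end Pows

section Swaps
variable {n : ℕ} (hn : 3 ≤ n)

lemma swap_edge_mem (i : Fin n) (k : ℕ) :
    Equiv.swap (some (i, k + 1)) (some (i, k)) ∈ G (two_le_of_three_le hn) := by
  have h2 : 2 ≤ n := by omega
  have hg : ((shift h2 i)⁻¹ ^ (k + 2)) ∈ G h2 :=
    pow_mem (inv_mem (shift_mem_G _ _)) _
  have key := Equiv.swap_apply_apply ((shift h2 i)⁻¹ ^ (k + 2)) none (some (fsucc i, 0))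
  rw [inv_pow_none h2 i (k + 1), inv_pow_succ_zero h2 i k] at key
  rw [key]
  exact mul_mem (mul_mem hg (swap_center_zero_mem hn (fsucc i))) (inv_mem hg)

lemma swap_center_mem (i : Fin n) (k : ℕ) :
    Equiv.swap none (some (i, k)) ∈ G (two_le_of_three_le hn) := by
  have h2 : 2 ≤ n := by omega
  induction k with
  | zero => exact swap_center_zero_mem hn i
  | succ k ih =>
      have he := swap_edge_mem hn i k
      have key := Equiv.swap_apply_apply (Equiv.swap (some (i, k + 1)) (some (i, k)))
        (none : Option (Fin n × ℕ)) (some (i, k))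
      rw [Equiv.swap_apply_of_ne_of_ne (by simp) (by simp),
          Equiv.swap_apply_right] at key
      rw [key]
      exact mul_mem (mul_mem he ih) (inv_mem he)

lemma swap_mem {x y : Option (Fin n × ℕ)} (hxy : x ≠ y) :
    Equiv.swap x y ∈ G (two_le_of_three_le hn) := by
  have h2 : 2 ≤ n := by omega
  rcases x with _ | ⟨i, k⟩
  · rcases y with _ | ⟨j, l⟩
    · exact absurd rfl hxy
    · exact swap_center_mem hn j l
  · rcases y with _ | ⟨j, l⟩
    · rw [Equiv.swap_comm]
      exact swap_center_mem hn i k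
    · have h1 := swap_center_mem hn i k
      have h2' := swap_center_mem hn j l
      have key := Equiv.swap_apply_apply (Equiv.swap none (some (i, k)))
        (none : Option (Fin n × ℕ)) (some (j, l))
      rw [Equiv.swap_apply_left,
          Equiv.swap_apply_of_ne_of_ne (by simp) (by simpa using hxy.symm)] at key
      rw [key]
      exact mul_mem (mul_mem h1 h2') (inv_mem h1)

lemma finitary_mem : ∀ (N : ℕ) (F : Finset (Option (Fin n × ℕ)))
    (σ : Equiv.Perm (Option (Fin n × ℕ))), F.card ≤ N →
    (∀ v ∉ F, σ v = v) → σ ∈ G (two_le_of_three_le hn) := by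
  intro N
  induction N with
  | zero =>
      intro F σ hcard hfix
      have hF : F = ∅ := Finset.card_eq_zero.mp (Nat.le_zero.mp hcard)
      have : σ = 1 := Equiv.ext fun v => hfix v (by simp [hF])
      rw [this]; exact one_mem _
  | succ N ih =>
      intro F σ hcard hfix
      by_cases hσ : σ = 1
      · rw [hσ]; exact one_mem _
      · obtain ⟨a, ha⟩ : ∃ a, σ a ≠ a := by
          by_contra h
          push_neg at h
          exact hσ (Equiv.ext h)
        have haF : a ∈ F := by
          by_contra h
          exact ha (hfix a h)
        set σ' := Equiv.swap a (σ a) * σ with hσ'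
        have hfix' : ∀ v ∉ F.erase a, σ' v = v := by
          intro v hv
          by_cases hva : v = a
          · subst hva
            simp [hσ', Equiv.swap_apply_right]
          · have hvF : v ∉ F := fun h => hv (Finset.mem_erase.mpr ⟨hva, h⟩)
            have h1 : σ v = v := hfix v hvF
            have hvsa : v ≠ σ a := by
              intro h
              apply hva
              have : σ v = σ a := by rw [h1, h]
              exact σ.injective this
            simp [hσ', h1, Equiv.swap_apply_of_ne_of_ne hva hvsa]
        have hcard' : (F.erase a).card ≤ N := by
          have := Finset.card_erase_of_mem haF
          omega
        have hσ'G := ih (F.erase a) σ' hcard' hfix'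
        have : σ = (Equiv.swap a (σ a))⁻¹ * σ' := by
          rw [hσ']; group
        rw [this]
        exact mul_mem (inv_mem (swap_mem hn (Ne.symm ha))) hσ'G

end Swaps

end HoughtonProof
namespace HoughtonProof

section Vec
variable {n : ℕ} [NeZero n]

open Fin.NatCast in
/-- Exponents for building an element with prescribed translation vector. -/
def cf (s : Fin n → ℤ) (i : Fin n) : ℤ :=
  -(∑ t ∈ Finset.range (i.val + 1), s (t : Fin n))

lemma fsucc_eq_add_one (h2 : 2 ≤ n) (i : Fin n) : fsucc i = i + 1 := by
  apply Fin.ext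
  rw [Fin.add_def]
  simp [fsucc, Fin.val_one', Nat.mod_eq_of_lt (show 1 < n by omega)]

lemma val_sub_one (j : Fin n) :
    (j - 1).val = if j = 0 then n - 1 else j.val - 1 := by
  obtain ⟨n', rfl⟩ : ∃ n', n = n' + 1 := ⟨n - 1, by have := NeZero.pos n; omega⟩
  rw [Fin.coe_sub_one]
  simp

open Fin.NatCast in
lemma cf_sub (h2 : 2 ≤ n) (s : Fin n → ℤ) (hsum : (∑ i, s i) = 0) (j : Fin n) :
    cf s (j - 1) - cf s j = s j := by
  have hval := val_sub_one j
  by_cases hj : j = 0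
  · subst hj
    rw [if_pos rfl] at hval
    have h1 : cf s (0 - 1 : Fin n) = 0 := by
      unfold cf
      have : (n - 1) + 1 = n := by have := NeZero.pos n; omega
      rw [hval, this]
      rw [neg_eq_zero, ← hsum]
      rw [Finset.sum_range fun t => s (t : Fin n)]
      exact Fintype.sum_equiv (Fin.castOrderIso rfl).toEquiv _ _ (fun t => by simp)
    rw [h1]
    unfold cf
    simp [Finset.sum_range_one]
  · rw [if_neg hj] at hval
    have hj1 : 1 ≤ j.val := by
      rcases Nat.eq_zero_or_pos j.val with h | h
      · exact absurd (Fin.ext h) hj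
      · exact h
    unfold cf
    rw [hval]
    have : j.val - 1 + 1 = j.val := by omega
    rw [this]
    rw [Finset.sum_range_succ]
    simp

lemma sum_cf_tv (hn : 3 ≤ n) (s : Fin n → ℤ) (hsum : (∑ i, s i) = 0) :
    (∑ i, cf s i • tv i) = s := by
  have h2 : 2 ≤ n := by omega
  funext j
  rw [Finset.sum_apply]
  have hterm : ∀ i : Fin n, (cf s i • tv i) j =
      (if j = i then -cf s i else 0) + (if i = j - 1 then cf s i else 0) := by
    intro i
    have hcond : (j = fsucc i) ↔ (i = j - 1) := by
      rw [fsucc_eq_add_one h2 i]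
      constructor
      · intro h; rw [h]; simp
      · intro h; rw [h]; simp
    rw [Pi.smul_apply, smul_eq_mul]
    unfold tv
    by_cases ha : j = i
    · have hnf : j ≠ fsucc i := by rw [ha]; exact Ne.symm (fsucc_ne h2 i)
      have hb : ¬ i = j - 1 := fun h => hnf (hcond.mpr h)
      simp only [if_pos ha, if_neg hnf, if_neg hb]
      ring
    · by_cases hb : i = j - 1
      · have hf : j = fsucc i := hcond.mpr hb
        simp only [if_neg ha, if_pos hf, if_pos hb]
        ring
      · have hf : ¬ j = fsucc i := fun h => hb (hcond.mp h)
        simp only [if_neg ha, if_neg hf, if_neg hb]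
        ring
  rw [Finset.sum_congr rfl (fun i _ => hterm i), Finset.sum_add_distrib,
      Finset.sum_ite_eq Finset.univ j (fun i => -cf s i),
      Finset.sum_ite_eq' Finset.univ (j - 1) (fun i => cf s i)]
  simp only [Finset.mem_univ, if_pos]
  rw [neg_add_eq_sub, ← cf_sub h2 s hsum j]
end Vec

end HoughtonProof
namespace HoughtonProof

def Hsub (n : ℕ) : Subgroup (Equiv.Perm (Option (Fin n × ℕ))) where
  carrier := {σ | ∃ s : Fin n → ℤ, (∑ i, s i) = 0 ∧ HT σ s}
  one_mem' := ⟨0, by simp, HT.one⟩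
  mul_mem' := by
    rintro σ τ ⟨s, hs, h1⟩ ⟨t, ht, h2⟩
    exact ⟨s + t, by simp only [Pi.add_apply]; rw [Finset.sum_add_distrib, hs, ht, add_zero], h1.mul h2⟩
  inv_mem' := by
    rintro σ ⟨s, hs, h1⟩
    exact ⟨-s, by simp only [Pi.neg_apply]; rw [Finset.sum_neg_distrib, hs, neg_zero], h1.inv⟩

end HoughtonProof

open HoughtonProof

theorem closure_shifts_eq_houghton (n : ℕ) (hn : 3 ≤ n) :
    ((Subgroup.closure
        (Set.range fun i : Fin n => shift (by omega : 2 ≤ n) i)) :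
      Set (Equiv.Perm (Option (Fin n × ℕ)))) =
    {σ : Equiv.Perm (Option (Fin n × ℕ)) |
      ∃ (N : ℕ) (s : Fin n → ℤ), (∑ i, s i) = 0 ∧
        ∀ (i : Fin n) (k : ℕ), N ≤ k →
          ∃ m : ℕ, σ (some (i, k)) = some (i, m) ∧ (m : ℤ) = (k : ℤ) + s i} := by
  haveI : NeZero n := ⟨by omega⟩
  have h2 : 2 ≤ n := by omega
  have hG : Subgroup.closure (Set.range fun i : Fin n => shift (by omega : 2 ≤ n) i) = G h2 :=
    rfl
  rw [hG]
  ext σ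
  simp only [SetLike.mem_coe, Set.mem_setOf_eq]
  constructor
  · intro hσ
    have hle : G h2 ≤ Hsub n := by
      rw [G, Subgroup.closure_le]
      rintro x ⟨i, rfl⟩
      exact ⟨tv i, tv_sum h2 i, HT.shift h2 i⟩
    obtain ⟨s, hsum, N, h⟩ := hle hσ
    exact ⟨N, s, hsum, h⟩
  · rintro ⟨N, s, hsum, h⟩
    set τ : Equiv.Perm (Option (Fin n × ℕ)) :=
      ((List.finRange n).map (fun i => shift h2 i ^ (cf s i))).prod with hτdef
    have hτG : τ ∈ G h2 := by
      apply list_prod_mem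
      intro x hx
      obtain ⟨i, _, rfl⟩ := List.mem_map.mp hx
      exact zpow_mem (shift_mem_G h2 i) _
    have hτ : HT τ s := by
      have h1 := HT.listProd (List.finRange n) (fun i => shift h2 i ^ (cf s i))
        (fun i => cf s i • tv i) (fun i _ => (HT.shift h2 i).zpow (cf s i))
      rw [← Fin.sum_univ_def (fun i => cf s i • tv i), sum_cf_tv hn s hsum] at h1
      exact h1
    have hστ : HT (σ * τ⁻¹) 0 := by
      have := HT.mul ⟨N, h⟩ hτ.inv
      rwa [add_neg_cancel] at this
    obtain ⟨M, hM⟩ := hστ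
    set F : Finset (Option (Fin n × ℕ)) :=
      insert none ((Finset.univ ×ˢ Finset.range M).image some) with hFdef
    have hfix : ∀ v ∉ F, (σ * τ⁻¹) v = v := by
      rintro (_ | ⟨i, k⟩) hv
      · exact absurd (Finset.mem_insert_self _ _) hv
      · have hk : M ≤ k := by
          by_contra hk
          push_neg at hk
          exact hv (Finset.mem_insert_of_mem (Finset.mem_image.mpr
            ⟨(i, k), Finset.mem_product.mpr ⟨Finset.mem_univ _, Finset.mem_range.mpr hk⟩, rfl⟩))
        obtain ⟨m, hm, hm2⟩ := hM i k hk
        have : m = k := by simpa using hm2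
        rw [hm, this]
    have hmem : σ * τ⁻¹ ∈ G h2 := finitary_mem hn F.card F (σ * τ⁻¹) le_rfl hfix
    have : σ = (σ * τ⁻¹) * τ := by group
    rw [this]
    exact mul_mem hmem hτG
end

section
/- Fix n ≥ 2 and r ≥ 1. Let X be a finite set of prefix-replacement permutations of Ω and let k : ℕ be such that for every x ∈ X, both x and x⁻¹ satisfy the prefix-replacement property at depth k (for every q : Fin r and every w : List (Fin n) of length k there exist q', w' with x (q, w ⬝ ω) = (q', w' ⬝ ω) for all ω, and similarly for x⁻¹). Let M ⊆ Ω be the finite set of all (q, w ⬝ c₀) where q : Fin r, w : List (Fin n) has length k, and c₀ is the constant sequence with value 0 : Fin n. Then for every word z : List (X × Bool) whose evaluation in Equiv.Perm Ω is not the identity, there exist lists x and y with z = x ++ y and an element m ∈ M such that (eval (y ++ x)) m ≠ m. -/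
/-- The sequence beginning with the entries of `w` followed by `ω`. -/
def prepend {n : ℕ} (w : List (Fin n)) (ω : ℕ → Fin n) : ℕ → Fin n :=
  fun i => if h : i < w.length then w.get ⟨i, h⟩ else ω (i - w.length)

/-- `σ` acts by prefix replacement at depth `k`. -/
def PrefixReplacementAt {n r : ℕ} (k : ℕ) (σ : Equiv.Perm (Fin r × (ℕ → Fin n))) : Prop :=
  ∀ (q : Fin r) (w : List (Fin n)), w.length = k →
    ∃ (q' : Fin r) (w' : List (Fin n)), ∀ ω : ℕ → Fin n,
      σ (q, prepend w ω) = (q', prepend w' ω)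

/-- Evaluation of a signed word over the alphabet `A` in the group `G`. -/
def evalWord {G A : Type*} [Group G] (f : A → G) (w : List (A × Bool)) : G :=
  (w.map fun p => if p.2 then f p.1 else (f p.1)⁻¹).prod



lemma prepend_pos {n : ℕ} {w : List (Fin n)} {ω : ℕ → Fin n} {i : ℕ} (h : i < w.length) :
    prepend w ω i = w[i] := by simp [prepend, h]

lemma prepend_neg {n : ℕ} {w : List (Fin n)} {ω : ℕ → Fin n} {i : ℕ} (h : ¬ i < w.length) :
    prepend w ω i = ω (i - w.length) := by simp [prepend, h]

lemma prepend_append {n : ℕ} (w v : List (Fin n)) (ω : ℕ → Fin n) :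
    prepend (w ++ v) ω = prepend w (prepend v ω) := by
  funext i
  by_cases h1 : i < w.length
  · rw [prepend_pos (by simp; omega), prepend_pos h1, List.getElem_append_left h1]
  · by_cases h2 : i < w.length + v.length
    · rw [prepend_pos (by simp; omega), prepend_neg h1,
        prepend_pos (by omega), List.getElem_append_right (by omega)]
    · rw [prepend_neg (by simp; omega), prepend_neg h1, prepend_neg (by omega)]
      congr 1
      simp
      omega

lemma prepend_of_agree {n : ℕ} {u : List (Fin n)} {ξ : ℕ → Fin n}
    (h : ∀ i (hi : i < u.length), ξ i = u[i]) :
    ξ = prepend u (fun j => ξ (j + u.length)) := by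
  funext i
  by_cases h1 : i < u.length
  · rw [prepend_pos h1]; exact h i h1
  · rw [prepend_neg h1]
    congr 1
    omega

lemma PrefixReplacementAt.ext {n r k : ℕ} {σ : Equiv.Perm (Fin r × (ℕ → Fin n))}
    (h : PrefixReplacementAt k σ) (q : Fin r) (u : List (Fin n)) (hu : k ≤ u.length) :
    ∃ (q' : Fin r) (u' : List (Fin n)), u.length - k ≤ u'.length ∧
      ∀ ω, σ (q, prepend u ω) = (q', prepend u' ω) := by
  obtain ⟨q', w', hw⟩ := h q (u.take k) (by simp; omega)
  refine ⟨q', w' ++ u.drop k, by simp, fun ω => ?_⟩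
  have hu' : prepend u ω = prepend (u.take k) (prepend (u.drop k) ω) := by
    rw [← prepend_append, List.take_append_drop]
  rw [hu', hw, prepend_append]

lemma prod_struct {n r k : ℕ} (l : List (Equiv.Perm (Fin r × (ℕ → Fin n))))
    (hl : ∀ σ ∈ l, PrefixReplacementAt k σ) :
    ∀ (q : Fin r) (u : List (Fin n)), k * l.length ≤ u.length →
      ∃ q' u', ∀ ω, l.prod (q, prepend u ω) = (q', prepend u' ω) := by
  induction l using List.reverseRecOn with
  | nil => exact fun q u _ => ⟨q, u, fun ω => by simp⟩
  | append_singleton l σ ih =>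
    intro q u hu
    simp only [List.length_append, List.length_singleton, Nat.mul_succ] at hu
    obtain ⟨q1, u1, hlen, hf⟩ := (hl σ (by simp)).ext q u (by omega)
    obtain ⟨q', u', hf'⟩ := ih (fun τ hτ => hl τ (by simp [hτ])) q1 u1 (by omega)
    refine ⟨q', u', fun ω => ?_⟩
    rw [List.prod_append, List.prod_singleton, Equiv.Perm.mul_apply, hf, hf']

lemma main_aux {n r k : ℕ} (hn : 2 ≤ n)
    (l₀ : List (Equiv.Perm (Fin r × (ℕ → Fin n))))
    (hPR : ∀ σ ∈ l₀, PrefixReplacementAt k σ ∧ PrefixReplacementAt k σ⁻¹)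
    (hfix : ∀ (j : ℕ) (q : Fin r) (w : List (Fin n)), w.length = k →
      ((l₀.rotate j).prod) (q, prepend w (fun _ => (⟨0, by omega⟩ : Fin n)))
        = (q, prepend w (fun _ => (⟨0, by omega⟩ : Fin n)))) :
    l₀.prod = 1 := by
  classical
  by_contra hg
  set z0 : Fin n := ⟨0, by omega⟩ with hz0
  set c0 : ℕ → Fin n := fun _ => z0 with hc0
  set iR : List (Equiv.Perm (Fin r × (ℕ → Fin n))) → List (Equiv.Perm (Fin r × (ℕ → Fin n))) :=
    fun l => (l.map (·⁻¹)).reverse with hiR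
  have hiRprod : ∀ l, (iR l).prod = l.prod⁻¹ := fun l => (List.prod_inv_reverse l).symm
  set Good : List (Equiv.Perm (Fin r × (ℕ → Fin n))) → Prop :=
    fun l => ∃ j, l = l₀.rotate j ∨ l = iR (l₀.rotate j) with hGood
  have hG0 : Good l₀ := ⟨0, Or.inl (l₀.rotate_zero).symm⟩
  have hGrot : ∀ l, Good l → ∀ i, Good (l.rotate i) := by
    rintro l ⟨j, hj | hj⟩ i
    · exact ⟨j + i, Or.inl (by rw [hj, List.rotate_rotate])⟩
    · subst hj
      refine ⟨j + (((l₀.rotate j).map (·⁻¹)).length -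
        i % ((l₀.rotate j).map (·⁻¹)).length), Or.inr ?_⟩
      show (((l₀.rotate j).map (·⁻¹)).reverse).rotate i = _
      rw [List.rotate_reverse, ← List.map_rotate, List.rotate_rotate]
  have hGinv : ∀ l, Good l → Good (iR l) := by
    rintro l ⟨j, hj | hj⟩
    · exact ⟨j, Or.inr (by rw [hj])⟩
    · refine ⟨j, Or.inl ?_⟩
      rw [hj]
      show ((((l₀.rotate j).map (·⁻¹)).reverse).map (·⁻¹)).reverse = _
      rw [← List.map_reverse, List.reverse_reverse, List.map_map]
      simp
  have hGPR : ∀ l, Good l → ∀ σ ∈ l, PrefixReplacementAt k σ := by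
    rintro l ⟨j, hj | hj⟩ σ hσ
    · rw [hj, List.mem_rotate] at hσ
      exact (hPR σ hσ).1
    · rw [hj] at hσ
      simp only [iR, List.mem_reverse, List.mem_map, List.mem_rotate] at hσ
      obtain ⟨τ, hτ, rfl⟩ := hσ
      exact (hPR τ hτ).2
  have hGfix : ∀ l, Good l → ∀ (q : Fin r) (w : List (Fin n)), w.length = k →
      l.prod (q, prepend w c0) = (q, prepend w c0) := by
    rintro l ⟨j, hj | hj⟩ q w hw
    · rw [hj]; exact hfix j q w hw
    · rw [hj, hiRprod]
      have := hfix j q w hw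
      nth_rewrite 1 [← this]
      exact Equiv.symm_apply_apply _ _
  -- existence of a moved eventually-zero point
  have hP : ∃ D : ℕ, ∃ l, Good l ∧ ∃ p : Fin r × (ℕ → Fin n),
      (∀ t, D ≤ t → p.2 t = z0) ∧ l.prod p ≠ p := by
    have hmv : ∃ pt, l₀.prod pt ≠ pt := by
      by_contra h'
      push_neg at h'
      exact hg (Equiv.ext fun x => (h' x).trans (Equiv.Perm.one_apply x).symm)
    obtain ⟨⟨q, ξ⟩, hmv⟩ := hmv
    set u : List (Fin n) := List.ofFn (fun i : Fin (k * l₀.length) => ξ i) with hu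
    set ω : ℕ → Fin n := fun j => ξ (j + u.length) with hω
    have hξ : ξ = prepend u ω := prepend_of_agree (by
      intro i hi
      simp only [hu, List.getElem_ofFn])
    obtain ⟨q', u', hstr⟩ := prod_struct l₀ (fun σ hσ => (hPR σ hσ).1) q u (by simp [hu])
    rw [hξ] at hmv
    rw [hstr] at hmv
    by_cases hq : q' = q
    · subst hq
      have hne : prepend u' ω ≠ prepend u ω := fun hh => hmv (by rw [hh])
      obtain ⟨i, hi⟩ := Function.ne_iff.mp hne
      set ω' : ℕ → Fin n := prepend (List.ofFn fun t : Fin (i+1) => ω t) c0 with hω'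
      have hω'agree : ∀ (v : List (Fin n)), prepend v ω' i = prepend v ω i := by
        intro v
        by_cases hv : i < v.length
        · rw [prepend_pos hv, prepend_pos hv]
        · rw [prepend_neg hv, prepend_neg hv, hω', prepend_pos (by simp)]
          rw [List.getElem_ofFn]
      refine ⟨max u.length u'.length + (i+1), l₀, hG0, (q', prepend u ω'), ?_, ?_⟩
      · intro t ht
        simp only
        rw [prepend_neg (by omega), hω', prepend_neg (by simp; omega)]
      · rw [hstr]
        intro hEq
        have h2 := congrFun (congrArg Prod.snd hEq) i
        simp only at h2
        rw [hω'agree, hω'agree] at h2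
        exact hi h2
    · refine ⟨u.length, l₀, hG0, (q, prepend u c0), ?_, ?_⟩
      · intro t ht
        simp only
        rw [prepend_neg (by omega)]
      · rw [hstr]
        intro hEq
        exact hq (congrArg Prod.fst hEq)
  set d := Nat.find hP with hd_def
  obtain ⟨h, hGh, p, hTail, hmoved⟩ := Nat.find_spec hP
  have hsharp : ∀ D, D < d → ∀ l, Good l → ∀ p' : Fin r × (ℕ → Fin n),
      (∀ t, D ≤ t → p'.2 t = z0) → l.prod p' = p' := by
    intro D hD l hGl p' hT
    by_contra hne
    exact Nat.find_min hP hD ⟨l, hGl, p', hT, hne⟩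
  have hd : k + 1 ≤ d := by
    by_contra hdk
    push_neg at hdk
    have hTk : ∀ t, k ≤ t → p.2 t = z0 := fun t ht => hTail t (by omega)
    have hp2 : p.2 = prepend (List.ofFn fun i : Fin k => p.2 i) c0 := by
      funext t
      by_cases htk : t < k
      · rw [prepend_pos (by simpa using htk)]
        simp
      · rw [prepend_neg (by simpa using htk)]
        exact hTk t (by omega)
    apply hmoved
    have := hGfix h hGh p.1 (List.ofFn fun i : Fin k => p.2 i) (by simp)
    rw [← hp2] at this
    simpa using this
  -- marker value at depth d-1
  have ha : p.2 (d - 1) ≠ z0 := by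
    intro ha
    apply Nat.find_min hP (show d - 1 < d by omega)
    refine ⟨h, hGh, p, fun t ht => ?_, hmoved⟩
    by_cases h1 : t = d - 1
    · rw [h1]; exact ha
    · exact hTail t (by omega)
  set a : Fin n := p.2 (d-1) with ha_def
  set θ : ℕ → Fin n := fun t => if t = 0 then a else z0 with hθ
  have hθ1 : ∀ t, 1 ≤ t → θ t = z0 := by
    intro t ht
    simp only [hθ]
    rw [if_neg (by omega)]
  set u : List (Fin n) := List.ofFn (fun i : Fin (d-1) => p.2 i) with hu
  have hulen : u.length = d - 1 := by simp [hu]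
  have hp2 : p.2 = prepend u θ := by
    funext t
    by_cases h1 : t < d - 1
    · rw [prepend_pos (by omega)]
      simp only [hu, List.getElem_ofFn]
    · rw [prepend_neg (by omega), hulen]
      by_cases h2 : t = d - 1
      · subst h2
        rw [Nat.sub_self]
        simp only [hθ, if_pos rfl, ha_def]
      · simp only [hθ]
        rw [if_neg (by omega)]
        exact hTail t (by omega)
  have hmoved' : h.prod (p.1, prepend u θ) ≠ (p.1, prepend u θ) := by
    rw [show ((p.1 : Fin r), prepend u θ) = p from by rw [← hp2]]
    exact hmoved
  -- the downward trajectory induction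
  have hIND : ∀ (i : ℕ) (l : List (Equiv.Perm (Fin r × (ℕ → Fin n)))), Good l → i ≤ l.length →
      ∀ (q : Fin r) (v : List (Fin n)), d - 1 ≤ v.length →
      l.prod (q, prepend v θ) ≠ (q, prepend v θ) →
      ∃ q' v', d - 1 ≤ v'.length ∧
        ∀ ω, (l.drop (l.length - i)).prod (q, prepend v ω) = (q', prepend v' ω) := by
    intro i
    induction i with
    | zero =>
      intro l _ _ q v hv _
      refine ⟨q, v, hv, fun ω => ?_⟩
      rw [Nat.sub_zero, List.drop_length]
      simp
    | succ i ih =>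
      intro l hGl hil q v hv hmv
      obtain ⟨q1, u1, hu1, hf1⟩ := ih l hGl (by omega) q v hv hmv
      have hjlt : l.length - (i+1) < l.length := by omega
      have hjj : l.length - i = (l.length - (i+1)) + 1 := by omega
      set j := l.length - (i+1) with hjdef
      rw [hjj] at hf1
      obtain ⟨q2, u2, _, hf2⟩ := (hGPR l hGl l[j] (List.getElem_mem _)).ext q1 u1 (by omega)
      have hform : ∀ ω, (l.drop j).prod (q, prepend v ω) = (q2, prepend u2 ω) := by
        intro ω
        rw [List.drop_eq_getElem_cons hjlt, List.prod_cons, Equiv.Perm.mul_apply, hf1, hf2]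
      refine ⟨q2, u2, ?_, hform⟩
      by_contra hlen
      push_neg at hlen
      have htail2 : ∀ t, u2.length + 1 ≤ t → (prepend u2 θ) t = z0 := by
        intro t ht
        rw [prepend_neg (by omega)]
        exact hθ1 _ (by omega)
      have hfixρ := hsharp (u2.length + 1) (by omega) (l.rotate j) (hGrot l hGl j)
        (q2, prepend u2 θ) htail2
      have hinner : (l.take j).prod ((l.drop j).prod (q, prepend v θ)) = l.prod (q, prepend v θ) := by
        rw [← Equiv.Perm.mul_apply, ← List.prod_append, List.take_append_drop]
      have hrot : (l.rotate j).prod (q2, prepend u2 θ)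
          = (l.drop j).prod (l.prod (q, prepend v θ)) := by
        rw [List.rotate_eq_drop_append_take (le_of_lt hjlt), List.prod_append,
          Equiv.Perm.mul_apply, ← hform θ, hinner]
      rw [hfixρ, ← hform θ] at hrot
      exact hmv ((Equiv.injective _ hrot).symm)
  -- apply the induction to h and to (iR h)
  obtain ⟨qs, us, hus_len, hfs0⟩ := hIND h.length h hGh le_rfl p.1 u (by omega) hmoved'
  have hfs : ∀ ω, h.prod (p.1, prepend u ω) = (qs, prepend us ω) := by
    intro ω
    have := hfs0 ω
    rwa [Nat.sub_self, List.drop_zero] at this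
  have hmovedInv : (iR h).prod (p.1, prepend u θ) ≠ (p.1, prepend u θ) := by
    rw [show ((p.1 : Fin r), prepend u θ) = p from by rw [← hp2], hiRprod]
    intro hEq
    have := congrArg h.prod hEq
    rw [← Equiv.Perm.mul_apply, mul_inv_cancel, Equiv.Perm.one_apply] at this
    exact hmoved this.symm
  obtain ⟨qt, ut, hut_len, hft0⟩ := hIND (iR h).length (iR h) (hGinv h hGh) le_rfl p.1 u
    (by omega) hmovedInv
  have hft : ∀ ω, (h.prod)⁻¹ (p.1, prepend u ω) = (qt, prepend ut ω) := by
    intro ω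
    have := hft0 ω
    rw [Nat.sub_self, List.drop_zero, hiRprod] at this
    exact this
  -- the zero-tail point of the cell is fixed
  have htail0 : ∀ t : ℕ, d - 1 ≤ t → (prepend u c0) t = z0 := by
    intro t ht
    rw [prepend_neg (by omega)]
  have hfix_s := hsharp (d-1) (by omega) h hGh (p.1, prepend u c0) htail0
  have hfix_t := hsharp (d-1) (by omega) (iR h) (hGinv h hGh) (p.1, prepend u c0) htail0
  rw [hfs c0] at hfix_s
  rw [hiRprod, hft c0] at hfix_t
  have hqs : qs = p.1 := congrArg Prod.fst hfix_s
  have hus_c0 : prepend us c0 = prepend u c0 := congrArg Prod.snd hfix_s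
  have hqt : qt = p.1 := congrArg Prod.fst hfix_t
  have hut_c0 : prepend ut c0 = prepend u c0 := congrArg Prod.snd hfix_t
  -- entry facts
  have hfact : ∀ (v : List (Fin n)), prepend v c0 = prepend u c0 → u.length ≤ v.length →
      (∀ i (h1 : i < u.length) (h1' : i < v.length), v[i] = u[i]) ∧
      (∀ i, u.length ≤ i → ∀ (h2 : i < v.length), v[i] = z0) := by
    intro v hvq hlenv
    constructor
    · intro i h1 h1'
      have := congrFun hvq i
      rw [prepend_pos h1', prepend_pos h1] at this
      exact this
    · intro i hle h2
      have := congrFun hvq i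
      rw [prepend_pos h2, prepend_neg (by omega)] at this
      exact this
  obtain ⟨hsA, hsB⟩ := hfact us hus_c0 (by omega)
  obtain ⟨htA, htB⟩ := hfact ut hut_c0 (by omega)
  -- the nonzero marker b
  set b : Fin n := ⟨1, by omega⟩ with hb_def
  have hbz : b ≠ z0 := by
    simp only [hb_def, hz0, Ne, Fin.mk.injEq]
    omega
  set mk : ℕ → ℕ → Fin n := fun s t => if t = s then b else z0 with hmk
  set δ : ℕ := ut.length - u.length with hδ
  have hkey : prepend ut (mk 0) = prepend u (mk δ) := by
    funext t
    by_cases h1 : t < u.length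
    · rw [prepend_pos (by omega), prepend_pos h1, htA t h1 (by omega)]
    · by_cases h2 : t < ut.length
      · rw [prepend_pos h2, prepend_neg h1, htB t (by omega) h2]
        simp only [hmk]
        rw [if_neg (by omega)]
      · rw [prepend_neg h2, prepend_neg h1]
        simp only [hmk]
        by_cases h3 : t = ut.length
        · rw [if_pos (by omega), if_pos (by omega)]
        · rw [if_neg (by omega), if_neg (by omega)]
  have hchain : ((p.1 : Fin r), prepend u (mk 0)) = (p.1, prepend us (mk δ)) := by
    have e1 : (h.prod)⁻¹ (p.1, prepend u (mk 0)) = (p.1, prepend u (mk δ)) := by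
      rw [hft (mk 0), hqt, hkey]
    calc ((p.1 : Fin r), prepend u (mk 0))
        = h.prod ((h.prod)⁻¹ (p.1, prepend u (mk 0))) := (Equiv.apply_symm_apply _ _).symm
      _ = h.prod (p.1, prepend u (mk δ)) := by rw [e1]
      _ = (qs, prepend us (mk δ)) := hfs (mk δ)
      _ = (p.1, prepend us (mk δ)) := by rw [hqs]
  have hseq : prepend u (mk 0) = prepend us (mk δ) := congrArg Prod.snd hchain
  have hval := congrFun hseq u.length
  rw [prepend_neg (lt_irrefl _)] at hval
  have hLHS : mk 0 (u.length - u.length) = b := by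
    rw [Nat.sub_self]
    simp [hmk]
  rw [hLHS] at hval
  by_cases hcase : u.length < us.length
  · rw [prepend_pos hcase] at hval
    exact hbz (hval.trans (hsB u.length le_rfl hcase))
  · have hus_u : us = u := List.ext_getElem (by omega) (fun i h1 h2 => hsA i h2 h1)
    apply hmoved'
    rw [hfs θ, hqs, hus_u]

theorem exists_cyclic_permutation_moving_M (n r : ℕ) (hn : 2 ≤ n) (hr : 1 ≤ r)
    (X : Finset (Equiv.Perm (Fin r × (ℕ → Fin n)))) (k : ℕ)
    (hX : ∀ x ∈ X, PrefixReplacementAt k x ∧ PrefixReplacementAt k x⁻¹)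
    (M : Set (Fin r × (ℕ → Fin n)))
    (hM : M = {ω : Fin r × (ℕ → Fin n) | ∃ (q : Fin r) (w : List (Fin n)),
      w.length = k ∧ ω = (q, prepend w (fun _ => (⟨0, by omega⟩ : Fin n)))})
    (z : List (X × Bool))
    (hz : evalWord (fun x : X => (x : Equiv.Perm (Fin r × (ℕ → Fin n)))) z ≠ 1) :
    ∃ x y : List (X × Bool), z = x ++ y ∧
      ∃ m ∈ M,
        (evalWord (fun x : X => (x : Equiv.Perm (Fin r × (ℕ → Fin n)))) (y ++ x)) m ≠ m := by
  classical
  by_contra hcon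
  push_neg at hcon
  apply hz
  have key : ∀ (w : List (X × Bool)),
      evalWord (fun x : X => (x : Equiv.Perm (Fin r × (ℕ → Fin n)))) w
        = (w.map (fun p : X × Bool =>
            if p.2 then (p.1 : Equiv.Perm (Fin r × (ℕ → Fin n))) else (↑p.1)⁻¹)).prod :=
    fun _ => rfl
  rw [key]
  apply main_aux hn
  · intro σ hσ
    rw [List.mem_map] at hσ
    obtain ⟨pp, hpp, rfl⟩ := hσ
    by_cases hb : pp.2
    · simp only [hb, if_true]
      exact hX pp.1 pp.1.2
    · simp only [Bool.not_eq_true] at hb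
      simp only [hb, Bool.false_eq_true, if_false]
      exact ⟨(hX pp.1 pp.1.2).2, by rw [inv_inv]; exact (hX pp.1 pp.1.2).1⟩
  · intro j q w hw
    by_cases hze : z = []
    · subst hze
      simp
    · have hzl : 0 < z.length := List.length_pos_iff.mpr hze
      have hj'lt : j % z.length < z.length := Nat.mod_lt _ hzl
      have hrot : (z.map (fun p : X × Bool =>
            if p.2 then (p.1 : Equiv.Perm (Fin r × (ℕ → Fin n))) else (↑p.1)⁻¹)).rotate j
          = (z.drop (j % z.length) ++ z.take (j % z.length)).map (fun p : X × Bool =>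
            if p.2 then (p.1 : Equiv.Perm (Fin r × (ℕ → Fin n))) else (↑p.1)⁻¹) := by
        rw [← List.rotate_mod, List.length_map,
          List.rotate_eq_drop_append_take (by rw [List.length_map]; omega),
          List.map_append, List.map_drop, List.map_take]
      rw [hrot, ← key]
      exact hcon (z.take (j % z.length)) (z.drop (j % z.length))
        (List.take_append_drop _ z).symm (q, prepend w (fun _ => ⟨0, by omega⟩))
        (by rw [hM]; exact ⟨q, w, hw, rfl⟩)
end
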